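/- Let ν be a finite signed Borel measure on [0,1]^d. Then there exists a unique right-continuous function f on [0,1]^d of bounded HK-variation such that f(x)=ν([0,x]) for all x∈[0,1]^d, and this f satisfies ‖ν‖ = V_HK0(f) + |f(0)|. Moreover, if f(x)=f(0)+f^+(x)−f^-(x) is the Jordan decomposition of f and ν=ν^+−ν^- is the Jordan decomposition of ν, then f^+(x)=ν^+([0,x]∖{0}) and f^-(x)=ν^-([0,x]∖{0}) for all x∈[0,1]^d. -/

import Mathlib

open MeasureTheory Finset

noncomputable section

/-- The quasi-volume `Δ` of `f` over the box `[a,b]` in the coordinates of `S`;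
the coordinates outside `S` are fixed according to the anchor point `p`. -/
def quasiVol {d : ℕ} (f : (Fin d → ℝ) → ℝ) (S : Finset (Fin d)) (p a b : Fin d → ℝ) : ℝ :=
  ∑ T ∈ S.powerset, (-1 : ℝ) ^ T.card *
    f (fun i => if i ∈ S then (if i ∈ T then a i else b i) else p i)

/-- A grid (a partition generated by one-dimensional partitions of the sides) of the
box `[lo, hi]` in the coordinates of `S`. -/
structure Grid (d : ℕ) (S : Finset (Fin d)) (lo hi : Fin d → ℝ) where
  m : Fin d → ℕ
  t : Fin d → ℕ → ℝ
  mono : ∀ i ∈ S, ∀ j k : ℕ, j ≤ k → k ≤ m i → t i j ≤ t i k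
  first : ∀ i ∈ S, t i 0 = lo i
  last : ∀ i ∈ S, t i (m i) = hi i

/-- The sum, over all cells of a grid, of the absolute value of the quasi-volume of the cell. -/
def gridSum {d : ℕ} (f : (Fin d → ℝ) → ℝ) (S : Finset (Fin d)) (p lo hi : Fin d → ℝ)
    (G : Grid d S lo hi) : ℝ :=
  ∑ k ∈ Fintype.piFinset (fun i => Finset.range (if i ∈ S then G.m i else 1)),
    |quasiVol f S p (fun i => G.t i (k i)) (fun i => G.t i (k i + 1))|

/-- The variation in the sense of Vitali of `f` on the face of the box `[lo, hi]` with active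
coordinates `S`, the remaining coordinates being fixed according to the anchor `p`:
the supremum of `gridSum` over all grids. -/
def vitaliVar {d : ℕ} (f : (Fin d → ℝ) → ℝ) (S : Finset (Fin d)) (p lo hi : Fin d → ℝ) : ℝ :=
  sSup (Set.range (gridSum f S p lo hi))

/-- The Vitali variation on the face `(S, p)` of `[lo, hi]` is bounded (finite). -/
def BddVitali {d : ℕ} (f : (Fin d → ℝ) → ℝ) (S : Finset (Fin d)) (p lo hi : Fin d → ℝ) : Prop :=
  BddAbove (Set.range (gridSum f S p lo hi))

/-- Hardy–Krause-type variation of `f` on the box `[lo, hi]` with anchor `p`: the sum, over all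
nonempty sets `S` of coordinates, of the Vitali variation of the restriction of `f` to the face
of `[lo, hi]` whose coordinates outside `S` are fixed according to `p`. -/
def hkVarOn {d : ℕ} (f : (Fin d → ℝ) → ℝ) (p lo hi : Fin d → ℝ) : ℝ :=
  ∑ S ∈ (Finset.univ : Finset (Fin d)).powerset.erase ∅, vitaliVar f S p lo hi

/-- All the Vitali variations occurring in `hkVarOn` are bounded. -/
def BddHKVarOn {d : ℕ} (f : (Fin d → ℝ) → ℝ) (p lo hi : Fin d → ℝ) : Prop :=
  ∀ S ∈ (Finset.univ : Finset (Fin d)).powerset.erase ∅, BddVitali f S p lo hi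

/-- The Hardy–Krause variation of `f` on `[0,1]^d`, anchored at `1`. -/
def hkVar {d : ℕ} (f : (Fin d → ℝ) → ℝ) : ℝ := hkVarOn f 1 0 1

/-- `f` has bounded Hardy–Krause variation (anchored at `1`). -/
def BddHKVar {d : ℕ} (f : (Fin d → ℝ) → ℝ) : Prop := BddHKVarOn f 1 0 1

/-- The Hardy–Krause variation of `f` on the box `[0, a]`, anchored at `0`. -/
def hkVar0On {d : ℕ} (f : (Fin d → ℝ) → ℝ) (a : Fin d → ℝ) : ℝ := hkVarOn f 0 0 a

/-- The Hardy–Krause variation of `f` on `[0,1]^d`, anchored at `0`. -/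
def hkVar0 {d : ℕ} (f : (Fin d → ℝ) → ℝ) : ℝ := hkVarOn f 0 0 1

/-- `f` has bounded Hardy–Krause variation anchored at `0`. -/
def BddHKVar0 {d : ℕ} (f : (Fin d → ℝ) → ℝ) : Prop := BddHKVarOn f 0 0 1

/-- `f` is completely monotone: every quasi-volume of an axis-parallel box contained in a face
of `[0,1]^d` (coordinates outside the active set `S` being fixed at `0` or `1`) is nonnegative. -/
def CompletelyMonotone {d : ℕ} (f : (Fin d → ℝ) → ℝ) : Prop :=
  ∀ S : Finset (Fin d), S.Nonempty → ∀ p : Fin d → ℝ, (∀ i ∉ S, p i = 0 ∨ p i = 1) →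
    ∀ a b : Fin d → ℝ, a ∈ Set.Icc (0 : Fin d → ℝ) 1 → b ∈ Set.Icc (0 : Fin d → ℝ) 1 →
      a ≤ b → 0 ≤ quasiVol f S p a b

/-- `f` is coordinatewise right-continuous at every point of `[0,1]^d`. -/
def RightCts {d : ℕ} (f : (Fin d → ℝ) → ℝ) : Prop :=
  ∀ x ∈ Set.Icc (0 : Fin d → ℝ) 1, ∀ i : Fin d,
    Filter.Tendsto (fun y : ℝ => f (Function.update x i y))
      (nhdsWithin (x i) (Set.Icc (x i) 1)) (nhds (f x))

/-- The star-discrepancy of the points `x 1, …, x N` with respect to the measure `μ`. -/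
def starDisc {d : ℕ} (N : ℕ) (x : Fin N → Fin d → ℝ) (μ : Measure (Fin d → ℝ)) : ℝ :=
  ⨆ a : Set.Icc (0 : Fin d → ℝ) 1,
    |(∑ n : Fin N, Set.indicator (Set.Icc 0 (a : Fin d → ℝ)) (fun _ => (1 : ℝ)) (x n)) / N
      - (μ (Set.Icc 0 (a : Fin d → ℝ))).toReal|

section Part1
variable {d : ℕ}

abbrev XX (d : ℕ) := (Set.Icc (0 : Fin d → ℝ) 1)

lemma coord_nonneg (z : XX d) (i : Fin d) : 0 ≤ z.val i := z.2.1 i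
lemma coord_le_one (z : XX d) (i : Fin d) : z.val i ≤ 1 := z.2.2 i

/-- lower-left orthant in the cube -/
def VV {d : ℕ} (x : Fin d → ℝ) : Set (XX d) := Subtype.val ⁻¹' Set.Icc 0 x

lemma mem_VV {x : Fin d → ℝ} {z : XX d} : z ∈ VV x ↔ ∀ i, z.val i ≤ x i := by
  constructor
  · intro h i; exact h.2 i
  · intro h; exact ⟨z.2.1, h⟩

lemma meas_VV (x : Fin d → ℝ) : MeasurableSet (VV x) :=
  (isClosed_Icc.preimage continuous_subtype_val).measurableSet

/-- half-open box in the coordinates of `S`, with constraint `z i ≤ p i` outside `S` -/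
def BoxP {d : ℕ} (S : Finset (Fin d)) (p a b : Fin d → ℝ) : Set (XX d) :=
  {z | ∀ i, if i ∈ S then (a i < z.val i ∧ z.val i ≤ b i) else z.val i ≤ p i}

lemma mem_BoxP {S : Finset (Fin d)} {p a b : Fin d → ℝ} {z : XX d} :
    z ∈ BoxP S p a b ↔ ∀ i, if i ∈ S then (a i < z.val i ∧ z.val i ≤ b i) else z.val i ≤ p i :=
  Iff.rfl

lemma measurable_coord (i : Fin d) : Measurable (fun z : XX d => z.val i) :=
  ((continuous_apply i).comp continuous_subtype_val).measurable

lemma meas_BoxP (S : Finset (Fin d)) (p a b : Fin d → ℝ) : MeasurableSet (BoxP S p a b) := by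
  have : BoxP S p a b = ⋂ i, {z : XX d |
      if i ∈ S then (a i < z.val i ∧ z.val i ≤ b i) else z.val i ≤ p i} := by
    ext z; simp [BoxP, Set.mem_iInter]
  rw [this]
  refine MeasurableSet.iInter (fun i => ?_)
  by_cases hi : i ∈ S
  · simp only [hi, if_true]
    exact (measurable_coord i) measurableSet_Ioc
  · simp only [hi, if_false]
    exact (measurable_coord i) measurableSet_Iic

/-- The key inclusion–exclusion identity for a finite measure. -/
lemma sum_measure_eq (μ : Measure (XX d)) [IsFiniteMeasure μ] (S : Finset (Fin d))
    (p a b : Fin d → ℝ) (hab : ∀ i ∈ S, a i ≤ b i) :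
    ∑ T ∈ S.powerset, (-1 : ℝ) ^ T.card *
      (μ (VV (fun i => if i ∈ S then (if i ∈ T then a i else b i) else p i))).toReal
      = (μ (BoxP S p a b)).toReal := by
  classical
  have hint : ∀ T ∈ S.powerset, Integrable (fun z : XX d =>
      (-1 : ℝ) ^ T.card * (VV (fun i => if i ∈ S then (if i ∈ T then a i else b i) else p i)).indicator
        (fun _ => (1:ℝ)) z) μ := by
    intro T _
    exact (((integrable_const (1:ℝ)).indicator (meas_VV _)).const_mul _)
  have hL : ∀ T ∈ S.powerset, (-1 : ℝ) ^ T.card *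
      (μ (VV (fun i => if i ∈ S then (if i ∈ T then a i else b i) else p i))).toReal
      = ∫ z : XX d, (-1 : ℝ) ^ T.card *
        (VV (fun i => if i ∈ S then (if i ∈ T then a i else b i) else p i)).indicator
          (fun _ => (1:ℝ)) z ∂μ := by
    intro T _
    rw [integral_const_mul]
    congr 1
    have := integral_indicator_one (μ := μ) (meas_VV (fun i =>
      if i ∈ S then (if i ∈ T then a i else b i) else p i))
    simpa [Pi.one_def, measureReal_def] using this.symm
  rw [Finset.sum_congr rfl hL, ← integral_finset_sum _ hint]
  have hR : (μ (BoxP S p a b)).toReal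
      = ∫ z : XX d, (BoxP S p a b).indicator (fun _ => (1:ℝ)) z ∂μ := by
    have := integral_indicator_one (μ := μ) (meas_BoxP S p a b)
    simpa [Pi.one_def, measureReal_def] using this.symm
  rw [hR]
  congr 1
  funext z
  -- pointwise identity
  have hVVind : ∀ c : Fin d → ℝ, (VV c).indicator (fun _ => (1:ℝ)) z
      = ∏ i : Fin d, (if z.val i ≤ c i then (1:ℝ) else 0) := by
    intro c
    rw [Finset.prod_boole, Set.indicator_apply]
    by_cases h : z ∈ VV c
    · rw [if_pos h, if_pos]; intro i _; exact (mem_VV.1 h) i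
    · rw [if_neg h, if_neg]; intro hc; exact h (mem_VV.2 (fun i => hc i (mem_univ i)))
  calc ∑ T ∈ S.powerset, (-1 : ℝ) ^ T.card *
        (VV (fun i => if i ∈ S then (if i ∈ T then a i else b i) else p i)).indicator
          (fun _ => (1:ℝ)) z
      = ∑ T ∈ S.powerset, (-1 : ℝ) ^ T.card *
        ((∏ i ∈ S, (if z.val i ≤ (if i ∈ T then a i else b i) then (1:ℝ) else 0)) *
          ∏ i ∈ Sᶜ, (if z.val i ≤ p i then (1:ℝ) else 0)) := by
        refine Finset.sum_congr rfl (fun T hT => ?_)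
        rw [hVVind]
        congr 1
        rw [← Finset.prod_mul_prod_compl S]
        congr 1
        · exact Finset.prod_congr rfl (fun i hi => by rw [if_pos hi])
        · exact Finset.prod_congr rfl (fun i hi => by rw [if_neg (Finset.mem_compl.1 hi)])
    _ = (∑ T ∈ S.powerset, (-1 : ℝ) ^ T.card *
          ∏ i ∈ S, (if z.val i ≤ (if i ∈ T then a i else b i) then (1:ℝ) else 0)) *
          ∏ i ∈ Sᶜ, (if z.val i ≤ p i then (1:ℝ) else 0) := by
        rw [Finset.sum_mul]; exact Finset.sum_congr rfl (fun T _ => by ring)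
    _ = (∏ i ∈ S, ((if z.val i ≤ b i then (1:ℝ) else 0) - (if z.val i ≤ a i then (1:ℝ) else 0))) *
          ∏ i ∈ Sᶜ, (if z.val i ≤ p i then (1:ℝ) else 0) := by
        congr 1
        have := Finset.prod_add (fun i => -(if z.val i ≤ a i then (1:ℝ) else 0))
          (fun i => (if z.val i ≤ b i then (1:ℝ) else 0)) S
        rw [show (∏ i ∈ S, ((if z.val i ≤ b i then (1:ℝ) else 0) - (if z.val i ≤ a i then (1:ℝ) else 0)))
            = ∏ i ∈ S, ((-(if z.val i ≤ a i then (1:ℝ) else 0)) + (if z.val i ≤ b i then (1:ℝ) else 0))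
            from Finset.prod_congr rfl (fun i _ => by ring), this]
        refine Finset.sum_congr rfl (fun T hT => ?_)
        have hTS := Finset.mem_powerset.1 hT
        rw [show (∏ i ∈ T, -(if z.val i ≤ a i then (1:ℝ) else 0))
            = (-1:ℝ)^T.card * ∏ i ∈ T, (if z.val i ≤ a i then (1:ℝ) else 0) by
          rw [← Finset.prod_const (-1:ℝ), ← Finset.prod_mul_distrib]
          exact Finset.prod_congr rfl (fun i _ => by ring)]
        rw [mul_assoc]
        congr 1
        calc (∏ i ∈ S, if z.val i ≤ (if i ∈ T then a i else b i) then (1:ℝ) else 0)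
            = ∏ i ∈ T ∪ (S \ T), (if z.val i ≤ (if i ∈ T then a i else b i) then (1:ℝ) else 0) := by
              rw [Finset.union_sdiff_of_subset hTS]
          _ = (∏ i ∈ T, (if z.val i ≤ (if i ∈ T then a i else b i) then (1:ℝ) else 0)) *
              ∏ i ∈ S \ T, (if z.val i ≤ (if i ∈ T then a i else b i) then (1:ℝ) else 0) :=
              Finset.prod_union Finset.disjoint_sdiff
          _ = (∏ i ∈ T, (if z.val i ≤ a i then (1:ℝ) else 0)) *
              ∏ i ∈ S \ T, (if z.val i ≤ b i then (1:ℝ) else 0) := by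
              congr 1
              · exact Finset.prod_congr rfl (fun i hi => by rw [if_pos hi])
              · exact Finset.prod_congr rfl (fun i hi => by
                  rw [if_neg (Finset.mem_sdiff.1 hi).2])
    _ = (BoxP S p a b).indicator (fun _ => (1:ℝ)) z := by
        have h1 : ∀ i ∈ S, ((if z.val i ≤ b i then (1:ℝ) else 0) - (if z.val i ≤ a i then (1:ℝ) else 0))
            = (if a i < z.val i ∧ z.val i ≤ b i then (1:ℝ) else 0) := by
          intro i hi
          by_cases h1 : z.val i ≤ a i
          · rw [if_pos (h1.trans (hab i hi)), if_pos h1, if_neg (fun h => absurd h.1 (not_lt.2 h1))]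
            ring
          · by_cases h2 : z.val i ≤ b i
            · rw [if_pos h2, if_neg h1, if_pos ⟨not_le.1 h1, h2⟩]; ring
            · rw [if_neg h2, if_neg h1, if_neg (fun h => absurd h.2 h2)]; ring
        rw [Finset.prod_congr rfl h1, Finset.prod_boole, Finset.prod_boole, Set.indicator_apply]
        have hmem : z ∈ BoxP S p a b ↔
            (∀ i ∈ S, a i < z.val i ∧ z.val i ≤ b i) ∧ (∀ i ∈ Sᶜ, z.val i ≤ p i) := by
          rw [mem_BoxP]
          constructor
          · intro h
            refine ⟨fun i hi => by have := h i; rwa [if_pos hi] at this,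
              fun i hi => by have := h i; rwa [if_neg (Finset.mem_compl.1 hi)] at this⟩
          · rintro ⟨hS, hSc⟩ i
            by_cases hi : i ∈ S
            · rw [if_pos hi]; exact hS i hi
            · rw [if_neg hi]; exact hSc i (Finset.mem_compl.2 hi)
        by_cases hP : ∀ i ∈ S, a i < z.val i ∧ z.val i ≤ b i <;>
          by_cases hQ : ∀ i ∈ Sᶜ, z.val i ≤ p i <;>
          simp_all [Finset.mem_compl]

end Part1
section Part2
variable {d : ℕ}

lemma quasiVol_congr_vec {f : (Fin d → ℝ) → ℝ} {S : Finset (Fin d)} {p p' a a' b b' : Fin d → ℝ}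
    (ha : ∀ i ∈ S, a i = a' i) (hb : ∀ i ∈ S, b i = b' i) (hp : ∀ i ∉ S, p i = p' i) :
    quasiVol f S p a b = quasiVol f S p' a' b' := by
  refine Finset.sum_congr rfl (fun T hT => ?_)
  have : (fun i => if i ∈ S then (if i ∈ T then a i else b i) else p i)
      = (fun i => if i ∈ S then (if i ∈ T then a' i else b' i) else p' i) := by
    funext i
    by_cases hi : i ∈ S
    · rw [if_pos hi, if_pos hi]
      by_cases hiT : i ∈ T
      · rw [if_pos hiT, if_pos hiT, ha i hi]
      · rw [if_neg hiT, if_neg hiT, hb i hi]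
    · rw [if_neg hi, if_neg hi, hp i hi]
  rw [this]

lemma quasiVol_congr_fun {f g : (Fin d → ℝ) → ℝ} {S : Finset (Fin d)} {p a b : Fin d → ℝ}
    (hfg : ∀ y ∈ Set.Icc (0 : Fin d → ℝ) 1, f y = g y)
    (ha : ∀ i ∈ S, 0 ≤ a i ∧ a i ≤ 1) (hb : ∀ i ∈ S, 0 ≤ b i ∧ b i ≤ 1)
    (hp : ∀ i ∉ S, 0 ≤ p i ∧ p i ≤ 1) :
    quasiVol f S p a b = quasiVol g S p a b := by
  refine Finset.sum_congr rfl (fun T hT => ?_)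
  have hmem : ∀ i, 0 ≤ (if i ∈ S then (if i ∈ T then a i else b i) else p i) ∧
      (if i ∈ S then (if i ∈ T then a i else b i) else p i) ≤ 1 := by
    intro i
    by_cases hi : i ∈ S
    · simp only [hi, if_true]
      by_cases hiT : i ∈ T
      · simpa [hiT] using ha i hi
      · simpa [hiT] using hb i hi
    · simp only [hi, if_false]
      exact hp i hi
  rw [hfg _ ⟨fun i => (hmem i).1, fun i => (hmem i).2⟩]

lemma quasiVol_sub (f g : (Fin d → ℝ) → ℝ) (S : Finset (Fin d)) (p a b : Fin d → ℝ) :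
    quasiVol (fun y => f y - g y) S p a b = quasiVol f S p a b - quasiVol g S p a b := by
  unfold quasiVol
  rw [← Finset.sum_sub_distrib]
  exact Finset.sum_congr rfl (fun T _ => by ring)

lemma sum_powerset_neg_one_pow_card_real (S : Finset (Fin d)) :
    ∑ T ∈ S.powerset, (-1:ℝ) ^ T.card = if S = ∅ then 1 else 0 := by
  have h := Finset.sum_powerset_neg_one_pow_card (x := S)
  have : ∑ T ∈ S.powerset, (-1:ℝ) ^ T.card = ((∑ T ∈ S.powerset, (-1:ℤ) ^ T.card : ℤ) : ℝ) := by
    push_cast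
    rfl
  rw [this, h]
  split_ifs <;> simp

lemma quasiVol_const (c : ℝ) (S : Finset (Fin d)) (hS : S ≠ ∅) (p a b : Fin d → ℝ) :
    quasiVol (fun _ => c) S p a b = 0 := by
  unfold quasiVol
  rw [← Finset.sum_mul, sum_powerset_neg_one_pow_card_real, if_neg hS, zero_mul]

lemma quasiVol_insert {f : (Fin d → ℝ) → ℝ} {S : Finset (Fin d)} {i : Fin d} (hi : i ∉ S)
    (p a b : Fin d → ℝ) :
    quasiVol f (insert i S) p a b
      = quasiVol f S (Function.update p i (b i)) a b
        - quasiVol f S (Function.update p i (a i)) a b := by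
  classical
  unfold quasiVol
  rw [Finset.sum_powerset_insert hi]
  have h1 : ∀ T ∈ S.powerset, (-1:ℝ) ^ T.card *
      f (fun j => if j ∈ insert i S then (if j ∈ T then a j else b j) else p j)
      = (-1:ℝ) ^ T.card *
      f (fun j => if j ∈ S then (if j ∈ T then a j else b j) else Function.update p i (b i) j) := by
    intro T hT
    have hTS := Finset.mem_powerset.1 hT
    have : (fun j => if j ∈ insert i S then (if j ∈ T then a j else b j) else p j)
        = (fun j => if j ∈ S then (if j ∈ T then a j else b j) else Function.update p i (b i) j) := by
      funext j
      by_cases hj : j = i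
      · subst hj
        rw [if_pos (Finset.mem_insert_self _ _), if_neg hi, if_neg (fun h => hi (hTS h)),
          Function.update_self]
      · rw [Function.update_of_ne hj]
        by_cases hjS : j ∈ S
        · rw [if_pos (Finset.mem_insert_of_mem hjS), if_pos hjS]
        · rw [if_neg (fun h => (Finset.mem_insert.1 h).elim hj hjS), if_neg hjS]
    rw [this]
  have h2 : ∀ T ∈ S.powerset, (-1:ℝ) ^ (insert i T).card *
      f (fun j => if j ∈ insert i S then (if j ∈ insert i T then a j else b j) else p j)
      = -((-1:ℝ) ^ T.card *
      f (fun j => if j ∈ S then (if j ∈ T then a j else b j) else Function.update p i (a i) j)) := by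
    intro T hT
    have hTS := Finset.mem_powerset.1 hT
    have hiT : i ∉ T := fun h => hi (hTS h)
    rw [Finset.card_insert_of_notMem hiT, pow_succ]
    have : (fun j => if j ∈ insert i S then (if j ∈ insert i T then a j else b j) else p j)
        = (fun j => if j ∈ S then (if j ∈ T then a j else b j) else Function.update p i (a i) j) := by
      funext j
      by_cases hj : j = i
      · subst hj
        rw [if_pos (Finset.mem_insert_self _ _), if_pos (Finset.mem_insert_self _ _), if_neg hi,
          Function.update_self]
      · rw [Function.update_of_ne hj]
        by_cases hjS : j ∈ S
        · rw [if_pos (Finset.mem_insert_of_mem hjS), if_pos hjS]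
          by_cases hjT : j ∈ T
          · rw [if_pos (Finset.mem_insert_of_mem hjT), if_pos hjT]
          · rw [if_neg (fun h => (Finset.mem_insert.1 h).elim hj hjT), if_neg hjT]
        · rw [if_neg (fun h => (Finset.mem_insert.1 h).elim hj hjS), if_neg hjS]
    rw [this]
    ring
  rw [Finset.sum_congr rfl h1, Finset.sum_congr rfl h2, Finset.sum_neg_distrib]
  ring

lemma sum_piFinset_update (F : Fin d → Finset ℕ) (i : Fin d) (g : (Fin d → ℕ) → ℝ) :
    ∑ k ∈ Fintype.piFinset F, g k
      = ∑ j ∈ F i, ∑ k ∈ Fintype.piFinset (Function.update F i {0}), g (Function.update k i j) := by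
  classical
  rw [← Finset.sum_product']
  refine Finset.sum_nbij' (fun k => (k i, Function.update k i 0))
    (fun jk => Function.update jk.2 i jk.1) ?_ ?_ ?_ ?_ ?_
  · intro k hk
    rw [Fintype.mem_piFinset] at hk
    refine Finset.mem_product.2 ⟨hk i, Fintype.mem_piFinset.2 (fun l => ?_)⟩
    dsimp only
    by_cases hl : l = i
    · subst hl; simp [Function.update_self]
    · rw [Function.update_of_ne hl, Function.update_of_ne hl]; exact hk l
  · intro jk hjk
    rw [Finset.mem_product] at hjk
    refine Fintype.mem_piFinset.2 (fun l => ?_)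
    by_cases hl : l = i
    · subst hl; rw [Function.update_self]; exact hjk.1
    · rw [Function.update_of_ne hl]
      have := Fintype.mem_piFinset.1 hjk.2 l
      rwa [Function.update_of_ne hl] at this
  · intro k hk
    simp only
    rw [Function.update_idem, Function.update_eq_self]
  · intro jk hjk
    rw [Finset.mem_product] at hjk
    have h2 := Fintype.mem_piFinset.1 hjk.2 i
    rw [Function.update_self, Finset.mem_singleton] at h2
    simp only [Function.update_self, Function.update_idem]
    rw [Prod.ext_iff]
    refine ⟨rfl, ?_⟩
    simp only
    rw [← h2, Function.update_eq_self]
  · intro k hk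
    dsimp only
    congr 1
    rw [Function.update_idem]
    exact (Function.update_eq_self _ _).symm

end Part2
section Part3
variable {d : ℕ}

lemma telescope_aux (f : (Fin d → ℝ) → ℝ) (lo hi : Fin d → ℝ) (m : Fin d → ℕ) (t : Fin d → ℕ → ℝ)
    (S : Finset (Fin d)) :
    ∀ p : Fin d → ℝ, (∀ i ∈ S, t i 0 = lo i) → (∀ i ∈ S, t i (m i) = hi i) →
    ∑ k ∈ Fintype.piFinset (fun i => Finset.range (if i ∈ S then m i else 1)),
      quasiVol f S p (fun i => t i (k i)) (fun i => t i (k i + 1)) = quasiVol f S p lo hi := by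
  classical
  induction S using Finset.induction_on with
  | empty =>
    intro p _ _
    have hpi : Fintype.piFinset
        (fun i : Fin d => Finset.range (if i ∈ (∅ : Finset (Fin d)) then m i else 1))
        = {fun _ => 0} := by
      ext k
      simp [Fintype.mem_piFinset, Nat.lt_one_iff, funext_iff]
    rw [hpi, Finset.sum_singleton]
    unfold quasiVol
    simp
  | @insert i S hiS IH =>
    intro p hfirst hlast
    rw [sum_piFinset_update (fun l => Finset.range (if l ∈ insert i S then m l else 1)) i]
    have hFi : Finset.range (if i ∈ insert i S then m i else 1) = Finset.range (m i) := by
      rw [if_pos (Finset.mem_insert_self i S)]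
    have hupd : Function.update (fun l => Finset.range (if l ∈ insert i S then m l else 1)) i
        ({0} : Finset ℕ) = (fun l => Finset.range (if l ∈ S then m l else 1)) := by
      funext l
      by_cases hl : l = i
      · subst hl
        rw [Function.update_self, if_neg hiS, Finset.range_one]
      · rw [Function.update_of_ne hl]
        congr 2
        simp [Finset.mem_insert, hl]
    rw [hFi, hupd]
    have hinner : ∀ j ∈ Finset.range (m i),
        ∑ k ∈ Fintype.piFinset (fun l => Finset.range (if l ∈ S then m l else 1)),
          quasiVol f (insert i S) p (fun l => t l (Function.update k i j l))
            (fun l => t l (Function.update k i j l + 1))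
        = quasiVol f S (Function.update p i (t i (j+1))) lo hi
          - quasiVol f S (Function.update p i (t i j)) lo hi := by
      intro j hj
      have hsummand : ∀ k ∈ Fintype.piFinset (fun l => Finset.range (if l ∈ S then m l else 1)),
          quasiVol f (insert i S) p (fun l => t l (Function.update k i j l))
            (fun l => t l (Function.update k i j l + 1))
          = quasiVol f S (Function.update p i (t i (j+1))) (fun l => t l (k l)) (fun l => t l (k l + 1))
            - quasiVol f S (Function.update p i (t i j)) (fun l => t l (k l)) (fun l => t l (k l + 1)) := by
        intro k _
        rw [quasiVol_insert hiS]
        simp only [Function.update_self]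
        congr 1
        · refine quasiVol_congr_vec (fun l hl => ?_) (fun l hl => ?_) (fun l _ => rfl) <;>
            rw [Function.update_of_ne (fun h : l = i => hiS (h ▸ hl))]
        · refine quasiVol_congr_vec (fun l hl => ?_) (fun l hl => ?_) (fun l _ => rfl) <;>
            rw [Function.update_of_ne (fun h : l = i => hiS (h ▸ hl))]
      rw [Finset.sum_congr rfl hsummand, Finset.sum_sub_distrib]
      congr 1
      · exact IH (Function.update p i (t i (j+1)))
          (fun l hl => hfirst l (Finset.mem_insert_of_mem hl))
          (fun l hl => hlast l (Finset.mem_insert_of_mem hl))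
      · exact IH (Function.update p i (t i j))
          (fun l hl => hfirst l (Finset.mem_insert_of_mem hl))
          (fun l hl => hlast l (Finset.mem_insert_of_mem hl))
    rw [Finset.sum_congr rfl hinner, Finset.sum_range_sub
      (fun j => quasiVol f S (Function.update p i (t i j)) lo hi) (m i)]
    rw [hlast i (Finset.mem_insert_self i S), hfirst i (Finset.mem_insert_self i S)]
    exact (quasiVol_insert hiS p lo hi).symm

lemma grid_telescope (f : (Fin d → ℝ) → ℝ) (S : Finset (Fin d)) (p lo hi : Fin d → ℝ)
    (G : Grid d S lo hi) :
    ∑ k ∈ Fintype.piFinset (fun i => Finset.range (if i ∈ S then G.m i else 1)),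
      quasiVol f S p (fun i => G.t i (k i)) (fun i => G.t i (k i + 1)) = quasiVol f S p lo hi :=
  telescope_aux f lo hi G.m G.t S p G.first G.last

end Part3
section Part4
variable {d : ℕ}

lemma quasiVol_zero_anchor (f : (Fin d → ℝ) → ℝ) (S : Finset (Fin d)) (x : Fin d → ℝ) :
    quasiVol f S 0 0 x = ∑ U ∈ S.powerset,
      (-1:ℝ) ^ ((S \ U).card) * f (fun i => if i ∈ U then x i else 0) := by
  classical
  unfold quasiVol
  refine Finset.sum_nbij' (fun T => S \ T) (fun U => S \ U) ?_ ?_ ?_ ?_ ?_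
  · intro T _; exact Finset.mem_powerset.2 (Finset.sdiff_subset)
  · intro U _; exact Finset.mem_powerset.2 (Finset.sdiff_subset)
  · intro T hT; exact Finset.sdiff_sdiff_eq_self (Finset.mem_powerset.1 hT)
  · intro U hU; exact Finset.sdiff_sdiff_eq_self (Finset.mem_powerset.1 hU)
  · intro T hT
    have hTS := Finset.mem_powerset.1 hT
    rw [Finset.sdiff_sdiff_eq_self hTS]
    refine congrArg _ (congrArg f (funext fun i => ?_))
    by_cases hiS : i ∈ S
    · rw [if_pos hiS]
      by_cases hiT : i ∈ T
      · rw [if_pos hiT, if_neg (fun h => (Finset.mem_sdiff.1 h).2 hiT), Pi.zero_apply]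
      · rw [if_neg hiT, if_pos (Finset.mem_sdiff.2 ⟨hiS, hiT⟩)]
    · rw [if_neg hiS, if_neg (fun h => hiS (Finset.mem_sdiff.1 h).1), Pi.zero_apply]

lemma sum_quasiVol_powerset (f : (Fin d → ℝ) → ℝ) (x : Fin d → ℝ) :
    ∑ S ∈ (Finset.univ : Finset (Fin d)).powerset, quasiVol f S 0 0 x = f x := by
  classical
  have h1 : ∑ S ∈ (Finset.univ : Finset (Fin d)).powerset, quasiVol f S 0 0 x
      = ∑ S ∈ (Finset.univ : Finset (Fin d)).powerset, ∑ U ∈ S.powerset,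
          (-1:ℝ) ^ ((S \ U).card) * f (fun i => if i ∈ U then x i else 0) :=
    Finset.sum_congr rfl (fun S _ => quasiVol_zero_anchor f S x)
  rw [h1]
  rw [Finset.sum_comm' (s := (Finset.univ : Finset (Fin d)).powerset)
    (t := fun S => S.powerset) (t' := (Finset.univ : Finset (Fin d)).powerset)
    (s' := fun U => (Finset.univ : Finset (Fin d)).powerset.filter (fun S => U ⊆ S))
    (by intro S U; simp [Finset.mem_powerset, Finset.mem_filter])]
  have h2 : ∀ U ∈ (Finset.univ : Finset (Fin d)).powerset,
      ∑ S ∈ (Finset.univ : Finset (Fin d)).powerset.filter (fun S => U ⊆ S),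
        (-1:ℝ) ^ ((S \ U).card) * f (fun i => if i ∈ U then x i else 0)
      = (if U = Finset.univ then 1 else 0) * f (fun i => if i ∈ U then x i else 0) := by
    intro U _
    rw [← Finset.sum_mul]
    congr 1
    have h3 : ∑ S ∈ (Finset.univ : Finset (Fin d)).powerset.filter (fun S => U ⊆ S),
        (-1:ℝ) ^ ((S \ U).card)
        = ∑ W ∈ ((Finset.univ : Finset (Fin d)) \ U).powerset, (-1:ℝ) ^ W.card := by
      refine Finset.sum_nbij' (fun S => S \ U) (fun W => U ∪ W) ?_ ?_ ?_ ?_ ?_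
      · intro S hS
        exact Finset.mem_powerset.2 (Finset.sdiff_subset_sdiff (Finset.subset_univ S) le_rfl)
      · intro W hW
        refine Finset.mem_filter.2 ⟨Finset.mem_powerset.2 (Finset.subset_univ _),
          Finset.subset_union_left⟩
      · intro S hS
        exact Finset.union_sdiff_of_subset (Finset.mem_filter.1 hS).2
      · intro W hW
        refine Finset.union_sdiff_cancel_left ?_
        have := Finset.mem_powerset.1 hW
        exact Finset.disjoint_left.2 (fun a haU haW => (Finset.mem_sdiff.1 (this haW)).2 haU)
      · intro S _; rfl
    rw [h3, sum_powerset_neg_one_pow_card_real]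
    congr 1
    rw [eq_iff_iff]
    constructor
    · intro h
      have : Finset.univ ⊆ U := by
        intro a _
        by_contra haU
        have : a ∈ (Finset.univ : Finset (Fin d)) \ U := Finset.mem_sdiff.2 ⟨Finset.mem_univ a, haU⟩
        rw [h] at this
        exact absurd this (Finset.notMem_empty a)
      exact Finset.univ_subset_iff.1 this
    · intro h; subst h; simp
  rw [Finset.sum_congr rfl h2]
  rw [Finset.sum_eq_single_of_mem Finset.univ (Finset.mem_powerset.2 le_rfl)
    (fun U _ hU => by rw [if_neg hU, zero_mul])]
  rw [if_pos rfl, one_mul]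
  congr 1
  funext i
  simp

lemma quasiVol_empty (f : (Fin d → ℝ) → ℝ) (p a b : Fin d → ℝ) :
    quasiVol f ∅ p a b = f p := by
  unfold quasiVol
  simp

lemma sum_quasiVol_erase (f : (Fin d → ℝ) → ℝ) (x : Fin d → ℝ) :
    ∑ S ∈ (Finset.univ : Finset (Fin d)).powerset.erase ∅, quasiVol f S 0 0 x
      = f x - f 0 := by
  classical
  have h := Finset.sum_erase_add (Finset.univ : Finset (Fin d)).powerset
    (fun S => quasiVol f S 0 0 x) (Finset.mem_powerset.2 (Finset.empty_subset _))
  rw [sum_quasiVol_powerset] at h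
  have h0 : quasiVol f ∅ 0 0 x = f 0 := quasiVol_empty f 0 0 x
  linarith [h, h0]

end Part4
section Part5
variable {d : ℕ}

lemma mem_BoxP' {S : Finset (Fin d)} {p a b : Fin d → ℝ} {z : XX d} :
    z ∈ BoxP S p a b ↔ (∀ i ∈ S, a i < z.val i ∧ z.val i ≤ b i) ∧ (∀ i ∉ S, z.val i ≤ p i) := by
  rw [mem_BoxP]
  constructor
  · intro h
    refine ⟨fun i hi => by have := h i; rwa [if_pos hi] at this,
      fun i hi => by have := h i; rwa [if_neg hi] at this⟩
  · rintro ⟨h1, h2⟩ i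
    by_cases hi : i ∈ S
    · rw [if_pos hi]; exact h1 i hi
    · rw [if_neg hi]; exact h2 i hi

/-- the trivial one-cell grid -/
def trivGrid (S : Finset (Fin d)) (lo hi : Fin d → ℝ) (h : ∀ i ∈ S, lo i ≤ hi i) :
    Grid d S lo hi where
  m := fun _ => 1
  t := fun i j => if j = 0 then lo i else hi i
  mono := by
    intro i hiS j k hjk hk1
    by_cases hj : j = 0
    · by_cases hk : k = 0
      · simp [hj, hk]
      · simp only [hj, hk, if_true, if_false, if_pos rfl, if_neg hk]
        exact h i hiS
    · have hk : k ≠ 0 := fun h0 => hj (Nat.le_zero.1 (h0 ▸ hjk))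
      simp [hj, hk]
  first := fun i _ => by simp
  last := fun i _ => by simp

instance gridNonempty (S : Finset (Fin d)) : Nonempty (Grid d S 0 (1 : Fin d → ℝ)) :=
  ⟨trivGrid S 0 1 (fun _ _ => by norm_num)⟩

lemma exists_cell (t : ℕ → ℝ) (m : ℕ) (z : ℝ) (h0 : t 0 < z) (hm : z ≤ t m) :
    ∃ j < m, t j < z ∧ z ≤ t (j + 1) := by
  induction m with
  | zero => exact absurd hm (not_le.2 h0)
  | succ m IH =>
    by_cases h : z ≤ t m
    · obtain ⟨j, hj, hj2⟩ := IH h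
      exact ⟨j, Nat.lt_succ_of_lt hj, hj2⟩
    · exact ⟨m, Nat.lt_succ_self m, not_le.1 h, hm⟩

/-- cells cover the box -/
lemma BoxP_cover {S : Finset (Fin d)} {p lo hi : Fin d → ℝ} (G : Grid d S lo hi) :
    BoxP S p lo hi ⊆ ⋃ k ∈ Fintype.piFinset (fun i => Finset.range (if i ∈ S then G.m i else 1)),
      BoxP S p (fun i => G.t i (k i)) (fun i => G.t i (k i + 1)) := by
  classical
  intro z hz
  rw [mem_BoxP'] at hz
  have hex : ∀ i ∈ S, ∃ j < G.m i, G.t i j < z.val i ∧ z.val i ≤ G.t i (j + 1) := by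
    intro i hi
    refine exists_cell (G.t i) (G.m i) (z.val i) ?_ ?_
    · rw [G.first i hi]; exact (hz.1 i hi).1
    · rw [G.last i hi]; exact (hz.1 i hi).2
  set k : Fin d → ℕ := fun i => if h : i ∈ S then Classical.choose (hex i h) else 0 with hk
  have hkmem : k ∈ Fintype.piFinset (fun i => Finset.range (if i ∈ S then G.m i else 1)) := by
    rw [Fintype.mem_piFinset]
    intro i
    by_cases hi : i ∈ S
    · rw [if_pos hi]
      simp only [hk, dif_pos hi]
      exact Finset.mem_range.2 (Classical.choose_spec (hex i hi)).1
    · rw [if_neg hi]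
      simp only [hk, dif_neg hi]
      exact Finset.mem_range.2 Nat.zero_lt_one
  refine Set.mem_biUnion hkmem ?_
  rw [mem_BoxP']
  constructor
  · intro i hi
    have hspec := (Classical.choose_spec (hex i hi)).2
    simp only [hk, dif_pos hi]
    exact hspec
  · intro i hi
    exact hz.2 i hi

/-- cells are inside the box -/
lemma BoxP_cell_subset {S : Finset (Fin d)} {p lo hi : Fin d → ℝ} (G : Grid d S lo hi)
    {k : Fin d → ℕ} (hk : ∀ i ∈ S, k i < G.m i) :
    BoxP S p (fun i => G.t i (k i)) (fun i => G.t i (k i + 1)) ⊆ BoxP S p lo hi := by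
  intro z hz
  rw [mem_BoxP'] at hz ⊢
  refine ⟨fun i hi => ?_, hz.2⟩
  refine ⟨lt_of_le_of_lt ?_ (hz.1 i hi).1, le_trans (hz.1 i hi).2 ?_⟩
  · rw [← G.first i hi]
    exact G.mono i hi 0 (k i) (Nat.zero_le _) (le_of_lt (hk i hi))
  · rw [← G.last i hi]
    exact G.mono i hi (k i + 1) (G.m i) (hk i hi) le_rfl

lemma BoxP_cells_pairwise_disjoint {S : Finset (Fin d)} {p lo hi : Fin d → ℝ}
    (G : Grid d S lo hi) :
    (↑(Fintype.piFinset (fun i => Finset.range (if i ∈ S then G.m i else 1))) :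
        Set (Fin d → ℕ)).PairwiseDisjoint
      (fun k => BoxP S p (fun i => G.t i (k i)) (fun i => G.t i (k i + 1))) := by
  intro k hk k' hk' hne
  rw [Finset.mem_coe, Fintype.mem_piFinset] at hk hk'
  have hex : ∃ i ∈ S, k i ≠ k' i := by
    by_contra h
    push_neg at h
    refine hne (funext fun i => ?_)
    by_cases hi : i ∈ S
    · exact h i hi
    · have h1 := hk i; have h2 := hk' i
      rw [if_neg hi, Finset.mem_range, Nat.lt_one_iff] at h1 h2
      rw [h1, h2]
  obtain ⟨i, hiS, hne'⟩ := hex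
  have hki := hk i; have hki' := hk' i
  rw [if_pos hiS, Finset.mem_range] at hki hki'
  simp only [Function.onFun]
  rw [Set.disjoint_left]
  intro z hz hz'
  rw [mem_BoxP'] at hz hz'
  rcases Nat.lt_or_ge (k i) (k' i) with hlt | hge
  · have h1 := (hz.1 i hiS).2
    have h2 := (hz'.1 i hiS).1
    have : G.t i (k i + 1) ≤ G.t i (k' i) := G.mono i hiS _ _ hlt (le_of_lt hki')
    linarith
  · have hlt : k' i < k i := lt_of_le_of_ne hge (Ne.symm hne')
    have h1 := (hz'.1 i hiS).2
    have h2 := (hz.1 i hiS).1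
    have : G.t i (k' i + 1) ≤ G.t i (k i) := G.mono i hiS _ _ hlt (le_of_lt hki)
    linarith

/-- boxes anchored at 0 with different active sets are disjoint -/
lemma BoxP_disjoint_of_ne {S S' : Finset (Fin d)} {a b a' b' : Fin d → ℝ} (hSS : S ≠ S')
    (ha : ∀ i ∈ S, 0 ≤ a i) (ha' : ∀ i ∈ S', 0 ≤ a' i) :
    Disjoint (BoxP S 0 a b) (BoxP S' 0 a' b') := by
  rw [Set.disjoint_left]
  intro z hz hz'
  rw [mem_BoxP'] at hz hz'
  have key : ∀ i, i ∈ S ↔ i ∈ S' := by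
    intro i
    constructor
    · intro hi
      by_contra hi'
      have h1 : 0 < z.val i := lt_of_le_of_lt (ha i hi) (hz.1 i hi).1
      have h2 : z.val i ≤ 0 := by simpa using hz'.2 i hi'
      linarith
    · intro hi'
      by_contra hi
      have h1 : 0 < z.val i := lt_of_le_of_lt (ha' i hi') (hz'.1 i hi').1
      have h2 : z.val i ≤ 0 := by simpa using hz.2 i hi
      linarith
  exact hSS (Finset.ext key)

def zpt (d : ℕ) : XX d := ⟨0, Set.left_mem_Icc.2 zero_le_one⟩

lemma BoxP_empty_eq : BoxP (∅ : Finset (Fin d)) 0 0 1 = {zpt d} := by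
  ext z
  rw [mem_BoxP']
  simp only [Finset.notMem_empty, Set.mem_singleton_iff]
  constructor
  · rintro ⟨-, h⟩
    have : z.val = 0 := funext (fun i => le_antisymm (by simpa using h i (by simp)) (coord_nonneg z i))
    exact Subtype.ext this
  · rintro rfl
    exact ⟨fun i hi => absurd hi (by simp), fun i _ => by simp [zpt]⟩

lemma BoxP_full_partition :
    ⋃ S ∈ (Finset.univ : Finset (Fin d)).powerset, BoxP S 0 0 1 = Set.univ := by
  classical
  ext z
  simp only [Set.mem_iUnion, Set.mem_univ, iff_true]
  refine ⟨Finset.univ.filter (fun i => 0 < z.val i), Finset.mem_powerset.2 (Finset.filter_subset _ _), ?_⟩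
  rw [mem_BoxP']
  constructor
  · intro i hi
    rw [Finset.mem_filter] at hi
    exact ⟨by simpa using hi.2, by simpa using coord_le_one z i⟩
  · intro i hi
    rw [Finset.mem_filter] at hi
    push_neg at hi
    simpa using hi (Finset.mem_univ i)

end Part5
section Part5b
variable {d : ℕ}

lemma two_pow_cast_div (n : ℕ) : ((2^n : ℕ) : ℝ) / 2^n = 1 := by
  rw [div_eq_one_iff_eq (by positivity)]
  norm_cast

/-- dyadic grid of mesh `2⁻ⁿ` refined with the coordinates of `x` as nodes -/
def gridN (n : ℕ) (x : Fin d → ℝ) (hx : x ∈ Set.Icc (0 : Fin d → ℝ) 1) (S : Finset (Fin d)) :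
    Grid d S 0 1 where
  m := fun _ => 2^n + (2^n + 1)
  t := fun i j => if j ≤ 2^n then min ((j : ℝ) / 2^n) (x i)
    else max (((j - (2^n + 1) : ℕ) : ℝ) / 2^n) (x i)
  mono := by
    intro i _ j k hjk _
    have hpow : (0:ℝ) < 2^n := by positivity
    by_cases hj : j ≤ 2^n
    · rw [if_pos hj]
      by_cases hk : k ≤ 2^n
      · rw [if_pos hk]
        refine min_le_min (div_le_div_of_nonneg_right ?_ hpow.le) le_rfl
        exact_mod_cast hjk
      · rw [if_neg hk]
        exact le_trans (min_le_right _ _) (le_max_right _ _)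
    · have hk : ¬ k ≤ 2^n := fun h => hj (hjk.trans h)
      rw [if_neg hj, if_neg hk]
      refine max_le_max (div_le_div_of_nonneg_right ?_ hpow.le) le_rfl
      exact_mod_cast Nat.sub_le_sub_right hjk _
  first := by
    intro i hi
    have hx0 : (0:ℝ) ≤ x i := by simpa using hx.1 i
    rw [if_pos (Nat.zero_le _)]
    simp only [Nat.cast_zero, zero_div, Pi.zero_apply]
    exact min_eq_left hx0
  last := by
    intro i hi
    have hx1 : x i ≤ 1 := by simpa using hx.2 i
    have h1 : ¬ (2^n + (2^n + 1) ≤ 2^n) := by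
      have : 0 < 2^n + 1 := Nat.succ_pos _
      omega
    rw [if_neg h1]
    have h2 : 2^n + (2^n + 1) - (2^n + 1) = 2^n := by omega
    rw [h2, two_pow_cast_div, Pi.one_apply]
    exact max_eq_left hx1

/-- the sub-grid of `[0,x]` inside `gridN` -/
def gridNsub (n : ℕ) (x : Fin d → ℝ) (hx : x ∈ Set.Icc (0 : Fin d → ℝ) 1) (S : Finset (Fin d)) :
    Grid d S 0 x where
  m := fun _ => 2^n
  t := (gridN n x hx S).t
  mono := by
    intro i hi j k hjk hk
    have hk' : k ≤ 2^n := hk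
    exact (gridN n x hx S).mono i hi j k hjk (by show k ≤ 2^n + (2^n+1); omega)
  first := (gridN n x hx S).first
  last := by
    intro i hi
    have hx1 : x i ≤ 1 := by simpa using hx.2 i
    show (gridN n x hx S).t i (2^n) = x i
    dsimp only [gridN]
    rw [if_pos le_rfl, two_pow_cast_div]
    exact min_eq_right hx1

lemma gridN_mesh (n : ℕ) (x : Fin d → ℝ) (hx : x ∈ Set.Icc (0 : Fin d → ℝ) 1)
    (S : Finset (Fin d)) (i : Fin d) (j : ℕ) :
    (gridN n x hx S).t i (j + 1) - (gridN n x hx S).t i j ≤ 1 / 2^n := by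
  have hpow : (0:ℝ) < 2^n := by positivity
  have hx0 : (0:ℝ) ≤ x i := by simpa using hx.1 i
  have hx1 : x i ≤ 1 := by simpa using hx.2 i
  dsimp only [gridN]
  by_cases hj1 : j + 1 ≤ 2^n
  · rw [if_pos hj1, if_pos (by omega)]
    have h5 : min (((j+1 : ℕ) : ℝ) / 2^n) (x i) ≤ min ((j : ℝ) / 2^n + 1/2^n) (x i + 1/2^n) := by
      refine min_le_min (le_of_eq ?_) (by linarith [one_div_pos.2 hpow])
      push_cast
      ring
    have h6 : min ((j : ℝ) / 2^n + 1/2^n) (x i + 1/2^n) = min ((j : ℝ) / 2^n) (x i) + 1/2^n :=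
      min_add_add_right _ _ _
    push_cast at h5 ⊢
    linarith
  · by_cases hj : j ≤ 2^n
    · have hj' : j = 2^n := by omega
      rw [if_neg hj1, if_pos hj, hj']
      have e1 : 2^n + 1 - (2^n + 1) = 0 := by omega
      rw [e1]
      simp only [Nat.cast_zero, zero_div, two_pow_cast_div]
      rw [max_eq_right hx0, min_eq_right hx1]
      simp [le_of_lt (one_div_pos.2 hpow)]
    · rw [if_neg hj1, if_neg hj]
      have e3 : j + 1 - (2^n + 1) = (j - (2^n+1)) + 1 := by omega
      rw [e3]
      have h7 : max (((j - (2^n+1) : ℕ) : ℝ) / 2^n + 1/2^n) (x i + 1/2^n)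
          = max (((j - (2^n+1) : ℕ) : ℝ) / 2^n) (x i) + 1/2^n := max_add_add_right _ _ _
      have h4 : max ((((j - (2^n+1) : ℕ) + 1 : ℕ) : ℝ) / 2^n) (x i)
          ≤ max (((j - (2^n+1) : ℕ) : ℝ) / 2^n + 1/2^n) (x i + 1/2^n) := by
        refine max_le_max (le_of_eq ?_) (by linarith [one_div_pos.2 hpow])
        push_cast
        ring
      push_cast at h4 h7 ⊢
      linarith
end Part5b
section Part6
variable {d : ℕ}

lemma biUnion_cells_eq {S : Finset (Fin d)} {p lo hi : Fin d → ℝ} (G : Grid d S lo hi) :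
    ⋃ k ∈ Fintype.piFinset (fun i => Finset.range (if i ∈ S then G.m i else 1)),
      BoxP S p (fun i => G.t i (k i)) (fun i => G.t i (k i + 1)) = BoxP S p lo hi := by
  apply Set.Subset.antisymm
  · refine Set.iUnion₂_subset (fun k hk => ?_)
    refine BoxP_cell_subset G (fun i hi => ?_)
    have := Fintype.mem_piFinset.1 hk i
    rwa [if_pos hi, Finset.mem_range] at this
  · exact BoxP_cover G

lemma sum_cells_toReal (μ : Measure (XX d)) [IsFiniteMeasure μ] {S : Finset (Fin d)}
    {p lo hi : Fin d → ℝ} (G : Grid d S lo hi) :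
    ∑ k ∈ Fintype.piFinset (fun i => Finset.range (if i ∈ S then G.m i else 1)),
      (μ (BoxP S p (fun i => G.t i (k i)) (fun i => G.t i (k i + 1)))).toReal
    = (μ (BoxP S p lo hi)).toReal := by
  rw [← ENNReal.toReal_sum (fun k _ => measure_ne_top μ _),
    ← measure_biUnion_finset (BoxP_cells_pairwise_disjoint G) (fun k _ => meas_BoxP _ _ _ _),
    biUnion_cells_eq G]

lemma quasiVol_meas (μ : Measure (XX d)) [IsFiniteMeasure μ] (S : Finset (Fin d))
    (p a b : Fin d → ℝ) (hab : ∀ i ∈ S, a i ≤ b i) :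
    quasiVol (fun x => (μ (VV x)).toReal) S p a b = (μ (BoxP S p a b)).toReal :=
  sum_measure_eq μ S p a b hab

variable (ν : MeasureTheory.SignedMeasure (XX d))

lemma nu_apply {A : Set (XX d)} (hA : MeasurableSet A) :
    ν A = (ν.toJordanDecomposition.posPart A).toReal
      - (ν.toJordanDecomposition.negPart A).toReal := by
  conv_lhs => rw [← ν.toSignedMeasure_toJordanDecomposition]
  show (ν.toJordanDecomposition.posPart.toSignedMeasure
    - ν.toJordanDecomposition.negPart.toSignedMeasure) A = _
  rw [MeasureTheory.VectorMeasure.sub_apply,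
    Measure.toSignedMeasure_apply_measurable hA,
    Measure.toSignedMeasure_apply_measurable hA]
  rfl

lemma quasiVol_nu (S : Finset (Fin d)) (p a b : Fin d → ℝ) (hab : ∀ i ∈ S, a i ≤ b i) :
    quasiVol (fun x => ν (VV x)) S p a b
      = (ν.toJordanDecomposition.posPart (BoxP S p a b)).toReal
        - (ν.toJordanDecomposition.negPart (BoxP S p a b)).toReal := by
  have hfun : (fun x : Fin d → ℝ => ν (VV x))
      = fun x => (ν.toJordanDecomposition.posPart (VV x)).toReal
        - (ν.toJordanDecomposition.negPart (VV x)).toReal :=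
    funext (fun x => nu_apply ν (meas_VV x))
  rw [hfun, quasiVol_sub, quasiVol_meas _ S p a b hab, quasiVol_meas _ S p a b hab]

lemma gridSum_nu_le {S : Finset (Fin d)} {p lo hi : Fin d → ℝ} (G : Grid d S lo hi) :
    gridSum (fun x => ν (VV x)) S p lo hi G
      ≤ (ν.toJordanDecomposition.posPart (BoxP S p lo hi)).toReal
        + (ν.toJordanDecomposition.negPart (BoxP S p lo hi)).toReal := by
  set μp := ν.toJordanDecomposition.posPart
  set μm := ν.toJordanDecomposition.negPart
  unfold gridSum
  have hterm : ∀ k ∈ Fintype.piFinset (fun i => Finset.range (if i ∈ S then G.m i else 1)),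
      |quasiVol (fun x => ν (VV x)) S p (fun i => G.t i (k i)) (fun i => G.t i (k i + 1))|
      ≤ (μp (BoxP S p (fun i => G.t i (k i)) (fun i => G.t i (k i + 1)))).toReal
        + (μm (BoxP S p (fun i => G.t i (k i)) (fun i => G.t i (k i + 1)))).toReal := by
    intro k hk
    have hab : ∀ i ∈ S, G.t i (k i) ≤ G.t i (k i + 1) := by
      intro i hi
      have := Fintype.mem_piFinset.1 hk i
      rw [if_pos hi, Finset.mem_range] at this
      exact G.mono i hi (k i) (k i + 1) (Nat.le_succ _) this
    rw [quasiVol_nu ν S p _ _ hab]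
    have h1 : (0:ℝ) ≤ (μp (BoxP S p (fun i => G.t i (k i)) (fun i => G.t i (k i + 1)))).toReal :=
      ENNReal.toReal_nonneg
    have h2 : (0:ℝ) ≤ (μm (BoxP S p (fun i => G.t i (k i)) (fun i => G.t i (k i + 1)))).toReal :=
      ENNReal.toReal_nonneg
    rw [abs_sub_le_iff]
    constructor <;> linarith
  calc ∑ k ∈ Fintype.piFinset (fun i => Finset.range (if i ∈ S then G.m i else 1)),
        |quasiVol (fun x => ν (VV x)) S p (fun i => G.t i (k i)) (fun i => G.t i (k i + 1))|
      ≤ ∑ k ∈ Fintype.piFinset (fun i => Finset.range (if i ∈ S then G.m i else 1)),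
        ((μp (BoxP S p (fun i => G.t i (k i)) (fun i => G.t i (k i + 1)))).toReal
          + (μm (BoxP S p (fun i => G.t i (k i)) (fun i => G.t i (k i + 1)))).toReal) :=
        Finset.sum_le_sum hterm
    _ = _ := by rw [Finset.sum_add_distrib, sum_cells_toReal, sum_cells_toReal]

lemma bddVitali_nu (S : Finset (Fin d)) (p : Fin d → ℝ) :
    BddVitali (fun x => ν (VV x)) S p 0 1 := by
  refine ⟨(ν.toJordanDecomposition.posPart (BoxP S p 0 1)).toReal
    + (ν.toJordanDecomposition.negPart (BoxP S p 0 1)).toReal, ?_⟩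
  rintro r ⟨G, rfl⟩
  exact gridSum_nu_le ν G

lemma vitaliVar_nu_le (S : Finset (Fin d)) :
    vitaliVar (fun x => ν (VV x)) S 0 0 1
      ≤ (ν.toJordanDecomposition.posPart (BoxP S 0 0 1)).toReal
        + (ν.toJordanDecomposition.negPart (BoxP S 0 0 1)).toReal := by
  refine csSup_le (Set.range_nonempty _) ?_
  rintro r ⟨G, rfl⟩
  exact gridSum_nu_le ν G

end Part6
section Part7
variable {d : ℕ}

/-- inner approximation by closed sets -/
lemma exists_closed_subset (μ : Measure (XX d)) [IsFiniteMeasure μ] {A : Set (XX d)}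
    (hA : MeasurableSet A) {ε : ENNReal} (hε : 0 < ε) :
    ∃ C, C ⊆ A ∧ IsClosed C ∧ μ (A \ C) ≤ ε := by
  have hlt : μ Aᶜ < μ Aᶜ + ε := ENNReal.lt_add_right (measure_ne_top μ _) hε.ne'
  obtain ⟨U, hUsup, hUopen, hUlt⟩ := Set.exists_isOpen_lt_of_lt Aᶜ _ hlt
  refine ⟨Uᶜ, ?_, hUopen.isClosed_compl, ?_⟩
  · exact Set.compl_subset_comm.1 hUsup
  · have h1 : A \ Uᶜ = U \ Aᶜ := by
      ext z
      simp only [Set.mem_diff, Set.mem_compl_iff, not_not]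
      tauto
    rw [h1, measure_diff hUsup hA.compl.nullMeasurableSet (measure_ne_top μ _)]
    exact tsub_le_iff_right.2 (le_of_lt (by rwa [add_comm] at hUlt))

/-- uniform separation of disjoint closed sets -/
lemma exists_sep {C₁ C₂ : Set (XX d)} (h1 : IsClosed C₁) (h2 : IsClosed C₂)
    (hdisj : Disjoint C₁ C₂) :
    ∃ δ : ℝ, 0 < δ ∧ ∀ z ∈ C₁, ∀ z' ∈ C₂, δ ≤ dist z z' := by
  rcases C₁.eq_empty_or_nonempty with hC1 | hC1
  · exact ⟨1, one_pos, fun z hz => absurd hz (by simp [hC1])⟩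
  rcases C₂.eq_empty_or_nonempty with hC2 | hC2
  · exact ⟨1, one_pos, fun z hz z' hz' => absurd hz' (by simp [hC2])⟩
  obtain ⟨z₀, hz₀, hmin⟩ := (h2.isCompact).exists_isMinOn hC2
    (Metric.continuous_infDist_pt C₁).continuousOn
  have hz₀n : z₀ ∉ C₁ := fun h => Set.disjoint_left.1 hdisj h hz₀
  have hδ : 0 < Metric.infDist z₀ C₁ := (h1.notMem_iff_infDist_pos hC1).1 hz₀n
  refine ⟨Metric.infDist z₀ C₁, hδ, fun z hz z' hz' => ?_⟩
  calc Metric.infDist z₀ C₁ ≤ Metric.infDist z' C₁ := hmin hz'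
    _ ≤ dist z' z := Metric.infDist_le_dist_of_mem hz
    _ = dist z z' := dist_comm _ _

/-- diameter of anchored cells -/
lemma BoxP_dist_le {S : Finset (Fin d)} {a b : Fin d → ℝ} {r : ℝ} (hr : 0 ≤ r)
    (hab : ∀ i ∈ S, b i - a i ≤ r) {z z' : XX d}
    (hz : z ∈ BoxP S 0 a b) (hz' : z' ∈ BoxP S 0 a b) : dist z z' ≤ r := by
  rw [Subtype.dist_eq]
  rw [dist_pi_le_iff hr]
  intro i
  rw [Real.dist_eq]
  rw [mem_BoxP'] at hz hz'
  by_cases hi : i ∈ S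
  · have h1 := hz.1 i hi
    have h2 := hz'.1 i hi
    rw [abs_sub_le_iff]
    constructor <;> [skip; skip] <;> linarith [hab i hi]
  · have h1 : z.val i ≤ 0 := by simpa using hz.2 i hi
    have h2 : z'.val i ≤ 0 := by simpa using hz'.2 i hi
    have h3 := coord_nonneg z i
    have h4 := coord_nonneg z' i
    have : z.val i = z'.val i := by linarith
    rw [this]
    simpa using hr

variable (ν : MeasureTheory.SignedMeasure (XX d))

lemma vitaliVar_nu_ge (S : Finset (Fin d)) :
    (ν.toJordanDecomposition.posPart (BoxP S 0 0 1)).toReal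
      + (ν.toJordanDecomposition.negPart (BoxP S 0 0 1)).toReal
    ≤ vitaliVar (fun x => ν (VV x)) S 0 0 1 := by
  classical
  set μp := ν.toJordanDecomposition.posPart with hμp
  set μm := ν.toJordanDecomposition.negPart with hμm
  set E := BoxP S 0 (0 : Fin d → ℝ) 1 with hE
  refine le_of_forall_pos_le_add (fun ε hε => ?_)
  set ε4 := ε / 4 with hε4
  have hε4pos : (0:ℝ) < ε4 := by positivity
  set ε' := ENNReal.ofReal ε4 with hε'
  have hε'pos : 0 < ε' := ENNReal.ofReal_pos.2 hε4pos
  have hε'top : ε' ≠ ⊤ := ENNReal.ofReal_ne_top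
  -- mutual singularity
  have hms := ν.toJordanDecomposition.mutuallySingular
  set U := hms.nullSet with hU
  have hUmeas : MeasurableSet U := hms.measurableSet_nullSet
  have hUp : μp U = 0 := hms.measure_nullSet
  have hUm : μm Uᶜ = 0 := hms.measure_compl_nullSet
  -- closed approximations
  obtain ⟨C₁, hC₁sub, hC₁closed, hC₁approx⟩ := exists_closed_subset μm hUmeas hε'pos
  obtain ⟨C₂, hC₂sub, hC₂closed, hC₂approx⟩ := exists_closed_subset μp hUmeas.compl hε'pos
  have hmC₁ : μm (Set.univ \ C₁) ≤ ε' := by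
    have hsub : Set.univ \ C₁ ⊆ (U \ C₁) ∪ Uᶜ := by
      intro z hz
      by_cases h : z ∈ U
      · exact Or.inl ⟨h, hz.2⟩
      · exact Or.inr h
    calc μm (Set.univ \ C₁) ≤ μm ((U \ C₁) ∪ Uᶜ) := measure_mono hsub
      _ ≤ μm (U \ C₁) + μm Uᶜ := measure_union_le _ _
      _ ≤ ε' + 0 := add_le_add hC₁approx (le_of_eq hUm)
      _ = ε' := by rw [add_zero]
  have hpC₂ : μp (Set.univ \ C₂) ≤ ε' := by
    have hsub : Set.univ \ C₂ ⊆ (Uᶜ \ C₂) ∪ U := by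
      intro z hz
      by_cases h : z ∈ U
      · exact Or.inr h
      · exact Or.inl ⟨h, hz.2⟩
    calc μp (Set.univ \ C₂) ≤ μp ((Uᶜ \ C₂) ∪ U) := measure_mono hsub
      _ ≤ μp (Uᶜ \ C₂) + μp U := measure_union_le _ _
      _ ≤ ε' + 0 := add_le_add hC₂approx (le_of_eq hUp)
      _ = ε' := by rw [add_zero]
  -- separation
  have hdisj : Disjoint C₁ C₂ :=
    Set.disjoint_left.2 (fun z hz hz' => (hC₂sub hz') (hC₁sub hz))
  obtain ⟨δ, hδpos, hδsep⟩ := exists_sep hC₁closed hC₂closed hdisj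
  -- fine grid
  obtain ⟨n, hn⟩ := exists_pow_lt_of_lt_one hδpos (by norm_num : (1:ℝ)/2 < 1)
  have hmesh : ((1:ℝ)/2)^n = 1/2^n := by rw [div_pow, one_pow]
  set G := gridN n 1 (Set.right_mem_Icc.2 zero_le_one) S with hG
  set K := Fintype.piFinset (fun i => Finset.range (if i ∈ S then G.m i else 1)) with hK
  set B : (Fin d → ℕ) → Set (XX d) :=
    fun k => BoxP S 0 (fun i => G.t i (k i)) (fun i => G.t i (k i + 1)) with hB
  have hcell_diam : ∀ k z z', z ∈ B k → z' ∈ B k → dist z z' < δ := by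
    intro k z z' hz hz'
    have h1 : dist z z' ≤ 1/2^n := by
      refine BoxP_dist_le (by positivity) (fun i _ => ?_) hz hz'
      have := gridN_mesh n 1 (Set.right_mem_Icc.2 zero_le_one) S i (k i)
      linarith
    calc dist z z' ≤ 1/2^n := h1
      _ = ((1:ℝ)/2)^n := hmesh.symm
      _ < δ := hn
  have hsep : ∀ k, ¬((B k ∩ C₁).Nonempty ∧ (B k ∩ C₂).Nonempty) := by
    rintro k ⟨⟨z, hz, hzC⟩, ⟨z', hz', hzC'⟩⟩
    exact absurd (hδsep z hzC z' hzC') (not_le.2 (hcell_diam k z z' hz hz'))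
  set K₂ := K.filter (fun k => (B k ∩ C₂).Nonempty) with hK₂
  set K₁ := K.filter (fun k => (B k ∩ C₁).Nonempty) with hK₁
  have hK₁₂disj : Disjoint K₁ K₂ := by
    rw [Finset.disjoint_left]
    intro k hk1 hk2
    exact hsep k ⟨(Finset.mem_filter.1 hk1).2, (Finset.mem_filter.1 hk2).2⟩
  -- measures of unions
  have hWmeas : ∀ (K' : Finset (Fin d → ℕ)), MeasurableSet (⋃ k ∈ K', B k) :=
    fun K' => MeasurableSet.biUnion (Finset.countable_toSet K') (fun k _ => meas_BoxP _ _ _ _)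
  have hsum_eq : ∀ (μ : Measure (XX d)) (_ : IsFiniteMeasure μ) (K' : Finset (Fin d → ℕ)),
      K' ⊆ K → ∑ k ∈ K', (μ (B k)).toReal = (μ (⋃ k ∈ K', B k)).toReal := by
    intro μ hfin K' hK'
    calc ∑ k ∈ K', (μ (B k)).toReal = (∑ k ∈ K', μ (B k)).toReal :=
          (ENNReal.toReal_sum (fun k _ => measure_ne_top μ _)).symm
      _ = (μ (⋃ k ∈ K', B k)).toReal := by
          rw [measure_biUnion_finset ((BoxP_cells_pairwise_disjoint G).subset
            (by exact_mod_cast hK')) (fun k _ => meas_BoxP _ _ _ _)]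
  have hcover : ⋃ k ∈ K, B k = E := biUnion_cells_eq G
  set W₁ := ⋃ k ∈ K₁, B k with hW₁
  set W₂ := ⋃ k ∈ K₂, B k with hW₂
  -- measure bounds
  have hEsub : E ⊆ W₂ ∪ (Set.univ \ C₂) := by
    intro z hz
    rw [← hcover] at hz
    rw [Set.mem_iUnion₂] at hz
    obtain ⟨k, hk, hzk⟩ := hz
    by_cases hzC : z ∈ C₂
    · left
      exact Set.mem_biUnion (Finset.mem_filter.2 ⟨hk, ⟨z, hzk, hzC⟩⟩) hzk
    · right
      exact ⟨Set.mem_univ z, hzC⟩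
  have hμpW₂ : (μp E).toReal ≤ (μp W₂).toReal + ε4 := by
    have h1 : μp E ≤ μp W₂ + ε' :=
      le_trans (measure_mono hEsub) (le_trans (measure_union_le _ _) (add_le_add le_rfl hpC₂))
    have h2 : μp W₂ + ε' ≠ ⊤ := ENNReal.add_ne_top.2 ⟨measure_ne_top _ _, hε'top⟩
    calc (μp E).toReal ≤ (μp W₂ + ε').toReal := ENNReal.toReal_mono h2 h1
      _ = (μp W₂).toReal + ε4 := by
          rw [ENNReal.toReal_add (measure_ne_top _ _) hε'top, ENNReal.toReal_ofReal hε4pos.le]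
  have hW₂C₁ : W₂ ⊆ Set.univ \ C₁ := by
    intro z hz
    rw [Set.mem_iUnion₂] at hz
    obtain ⟨k, hk, hzk⟩ := hz
    refine ⟨Set.mem_univ z, fun hzC => ?_⟩
    exact hsep k ⟨⟨z, hzk, hzC⟩, (Finset.mem_filter.1 hk).2⟩
  have hμmW₂ : (μm W₂).toReal ≤ ε4 := by
    have h1 : μm W₂ ≤ ε' := le_trans (measure_mono hW₂C₁) hmC₁
    calc (μm W₂).toReal ≤ ε'.toReal := ENNReal.toReal_mono hε'top h1
      _ = ε4 := ENNReal.toReal_ofReal hε4pos.le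
  have hEsub' : E ⊆ W₁ ∪ (Set.univ \ C₁) := by
    intro z hz
    rw [← hcover] at hz
    rw [Set.mem_iUnion₂] at hz
    obtain ⟨k, hk, hzk⟩ := hz
    by_cases hzC : z ∈ C₁
    · left
      exact Set.mem_biUnion (Finset.mem_filter.2 ⟨hk, ⟨z, hzk, hzC⟩⟩) hzk
    · right
      exact ⟨Set.mem_univ z, hzC⟩
  have hμmW₁ : (μm E).toReal ≤ (μm W₁).toReal + ε4 := by
    have h1 : μm E ≤ μm W₁ + ε' :=
      le_trans (measure_mono hEsub') (le_trans (measure_union_le _ _) (add_le_add le_rfl hmC₁))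
    have h2 : μm W₁ + ε' ≠ ⊤ := ENNReal.add_ne_top.2 ⟨measure_ne_top _ _, hε'top⟩
    calc (μm E).toReal ≤ (μm W₁ + ε').toReal := ENNReal.toReal_mono h2 h1
      _ = (μm W₁).toReal + ε4 := by
          rw [ENNReal.toReal_add (measure_ne_top _ _) hε'top, ENNReal.toReal_ofReal hε4pos.le]
  have hW₁C₂ : W₁ ⊆ Set.univ \ C₂ := by
    intro z hz
    rw [Set.mem_iUnion₂] at hz
    obtain ⟨k, hk, hzk⟩ := hz
    refine ⟨Set.mem_univ z, fun hzC => ?_⟩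
    exact hsep k ⟨(Finset.mem_filter.1 hk).2, ⟨z, hzk, hzC⟩⟩
  have hμpW₁ : (μp W₁).toReal ≤ ε4 := by
    have h1 : μp W₁ ≤ ε' := le_trans (measure_mono hW₁C₂) hpC₂
    calc (μp W₁).toReal ≤ ε'.toReal := ENNReal.toReal_mono hε'top h1
      _ = ε4 := ENNReal.toReal_ofReal hε4pos.le
  -- per-cell quasi-volume
  have hqv : ∀ k ∈ K, quasiVol (fun x => ν (VV x)) S 0
      (fun i => G.t i (k i)) (fun i => G.t i (k i + 1))
      = (μp (B k)).toReal - (μm (B k)).toReal := by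
    intro k hk
    refine quasiVol_nu ν S 0 _ _ (fun i hi => ?_)
    have hki := Fintype.mem_piFinset.1 hk i
    rw [if_pos hi, Finset.mem_range] at hki
    exact G.mono i hi (k i) (k i + 1) (Nat.le_succ _) hki
  -- lower bound for the grid sum
  have hK₂sub : K₂ ⊆ K := Finset.filter_subset _ _
  have hK₁sub : K₁ ⊆ K := Finset.filter_subset _ _
  have hsum₂ : ∑ k ∈ K₂, ((μp (B k)).toReal - (μm (B k)).toReal)
      = (μp W₂).toReal - (μm W₂).toReal := by
    rw [Finset.sum_sub_distrib, hsum_eq μp inferInstance K₂ hK₂sub,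
      hsum_eq μm inferInstance K₂ hK₂sub]
  have hsum₁ : ∑ k ∈ K₁, ((μm (B k)).toReal - (μp (B k)).toReal)
      = (μm W₁).toReal - (μp W₁).toReal := by
    rw [Finset.sum_sub_distrib, hsum_eq μm inferInstance K₁ hK₁sub,
      hsum_eq μp inferInstance K₁ hK₁sub]
  have hgrid : (μp W₂).toReal - (μm W₂).toReal + ((μm W₁).toReal - (μp W₁).toReal)
      ≤ gridSum (fun x => ν (VV x)) S 0 0 1 G := by
    have habs₂ : ∀ k ∈ K₂, (μp (B k)).toReal - (μm (B k)).toReal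
        ≤ |quasiVol (fun x => ν (VV x)) S 0 (fun i => G.t i (k i)) (fun i => G.t i (k i + 1))| := by
      intro k hk
      rw [hqv k (hK₂sub hk)]
      exact le_abs_self _
    have habs₁ : ∀ k ∈ K₁, (μm (B k)).toReal - (μp (B k)).toReal
        ≤ |quasiVol (fun x => ν (VV x)) S 0 (fun i => G.t i (k i)) (fun i => G.t i (k i + 1))| := by
      intro k hk
      rw [hqv k (hK₁sub hk)]
      rw [abs_sub_comm]
      exact le_abs_self _
    calc (μp W₂).toReal - (μm W₂).toReal + ((μm W₁).toReal - (μp W₁).toReal)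
        = ∑ k ∈ K₂, ((μp (B k)).toReal - (μm (B k)).toReal)
          + ∑ k ∈ K₁, ((μm (B k)).toReal - (μp (B k)).toReal) := by rw [hsum₂, hsum₁]
      _ ≤ ∑ k ∈ K₂, |quasiVol (fun x => ν (VV x)) S 0 (fun i => G.t i (k i)) (fun i => G.t i (k i + 1))|
          + ∑ k ∈ K₁, |quasiVol (fun x => ν (VV x)) S 0 (fun i => G.t i (k i)) (fun i => G.t i (k i + 1))| :=
          add_le_add (Finset.sum_le_sum habs₂) (Finset.sum_le_sum habs₁)
      _ = ∑ k ∈ K₂ ∪ K₁, |quasiVol (fun x => ν (VV x)) S 0 (fun i => G.t i (k i)) (fun i => G.t i (k i + 1))| :=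
          (Finset.sum_union hK₁₂disj.symm).symm
      _ ≤ ∑ k ∈ K, |quasiVol (fun x => ν (VV x)) S 0 (fun i => G.t i (k i)) (fun i => G.t i (k i + 1))| :=
          Finset.sum_le_sum_of_subset_of_nonneg (Finset.union_subset hK₂sub hK₁sub)
            (fun k _ _ => abs_nonneg _)
      _ = gridSum (fun x => ν (VV x)) S 0 0 1 G := rfl
  have hvit : gridSum (fun x => ν (VV x)) S 0 0 1 G ≤ vitaliVar (fun x => ν (VV x)) S 0 0 1 :=
    le_csSup (bddVitali_nu ν S 0) (Set.mem_range_self G)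
  have hε4sum : ε4 + ε4 + ε4 + ε4 = ε := by
    rw [hε4]; ring
  linarith

end Part7
section Part8
variable {d : ℕ}

lemma meas_singleton_zpt : MeasurableSet ({zpt d} : Set (XX d)) :=
  measurableSet_singleton _

lemma sum_ES (μ : Measure (XX d)) [IsFiniteMeasure μ] :
    ∑ S ∈ (Finset.univ : Finset (Fin d)).powerset.erase ∅, (μ (BoxP S 0 0 1)).toReal
      = (μ Set.univ).toReal - (μ ({zpt d} : Set (XX d))).toReal := by
  classical
  have hdisj : (↑((Finset.univ : Finset (Fin d)).powerset) :
      Set (Finset (Fin d))).PairwiseDisjoint (fun S => BoxP S 0 (0 : Fin d → ℝ) 1) := by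
    intro S _ S' _ hne
    simp only [Function.onFun]
    exact BoxP_disjoint_of_ne hne (fun i _ => le_rfl) (fun i _ => le_rfl)
  have hfull : ∑ S ∈ (Finset.univ : Finset (Fin d)).powerset, (μ (BoxP S 0 0 1)).toReal
      = (μ Set.univ).toReal := by
    rw [← ENNReal.toReal_sum (fun S _ => measure_ne_top μ _),
      ← measure_biUnion_finset hdisj (fun S _ => meas_BoxP _ _ _ _), BoxP_full_partition]
  have h := Finset.sum_erase_add (Finset.univ : Finset (Fin d)).powerset
    (fun S => (μ (BoxP S 0 0 1)).toReal) (Finset.mem_powerset.2 (Finset.empty_subset _))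
  rw [hfull] at h
  have h0 : (μ (BoxP (∅ : Finset (Fin d)) 0 0 1)).toReal = (μ ({zpt d} : Set (XX d))).toReal := by
    rw [BoxP_empty_eq]
  linarith [h, h0]

variable (ν : MeasureTheory.SignedMeasure (XX d))

lemma vitaliVar_nu_eq (S : Finset (Fin d)) :
    vitaliVar (fun x => ν (VV x)) S 0 0 1
      = (ν.toJordanDecomposition.posPart (BoxP S 0 0 1)).toReal
        + (ν.toJordanDecomposition.negPart (BoxP S 0 0 1)).toReal :=
  le_antisymm (vitaliVar_nu_le ν S) (vitaliVar_nu_ge ν S)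

lemma hkVar0_nu :
    hkVar0 (fun x => ν (VV x))
      = ((ν.toJordanDecomposition.posPart Set.univ).toReal
          + (ν.toJordanDecomposition.negPart Set.univ).toReal)
        - ((ν.toJordanDecomposition.posPart ({zpt d} : Set (XX d))).toReal
          + (ν.toJordanDecomposition.negPart ({zpt d} : Set (XX d))).toReal) := by
  unfold hkVar0 hkVarOn
  rw [Finset.sum_congr rfl (fun S _ => vitaliVar_nu_eq ν S), Finset.sum_add_distrib,
    sum_ES ν.toJordanDecomposition.posPart, sum_ES ν.toJordanDecomposition.negPart]
  ring

lemma VV_zero : VV (0 : Fin d → ℝ) = ({zpt d} : Set (XX d)) := by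
  ext z
  rw [mem_VV]
  constructor
  · intro h
    refine Set.mem_singleton_iff.2 (Subtype.ext (funext fun i => ?_))
    exact le_antisymm (by simpa [zpt] using h i) (coord_nonneg z i)
  · rintro rfl i
    simp [zpt]

lemma abs_f0 :
    |ν (VV (0 : Fin d → ℝ))|
      = (ν.toJordanDecomposition.posPart ({zpt d} : Set (XX d))).toReal
        + (ν.toJordanDecomposition.negPart ({zpt d} : Set (XX d))).toReal := by
  rw [VV_zero, nu_apply ν meas_singleton_zpt]
  have hms := ν.toJordanDecomposition.mutuallySingular
  by_cases h : zpt d ∈ hms.nullSet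
  · have hp : ν.toJordanDecomposition.posPart ({zpt d} : Set (XX d)) = 0 :=
      le_antisymm (le_trans (measure_mono (Set.singleton_subset_iff.2 h)) 
        (le_of_eq hms.measure_nullSet)) zero_le
    rw [hp]
    simp [abs_of_nonpos, ENNReal.toReal_nonneg, abs_of_nonneg]
  · have hm : ν.toJordanDecomposition.negPart ({zpt d} : Set (XX d)) = 0 :=
      le_antisymm (le_trans (measure_mono (Set.singleton_subset_iff.2 h))
        (le_of_eq hms.measure_compl_nullSet)) zero_le
    rw [hm]
    simp [abs_of_nonneg, ENNReal.toReal_nonneg]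

lemma totalVariation_clause :
    (ν.totalVariation Set.univ).toReal
      = hkVar0 (fun x => ν (VV x)) + |ν (VV (0 : Fin d → ℝ))| := by
  rw [hkVar0_nu ν, abs_f0 ν]
  have h : ν.totalVariation Set.univ
      = ν.toJordanDecomposition.posPart Set.univ + ν.toJordanDecomposition.negPart Set.univ := by
    rw [MeasureTheory.SignedMeasure.totalVariation, Measure.add_apply]
  rw [h, ENNReal.toReal_add (measure_ne_top _ _) (measure_ne_top _ _)]
  ring

lemma bddHKVar_nu : BddHKVar (fun x => ν (VV x)) :=
  fun S _ => bddVitali_nu ν S 1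

end Part8
section Part9
variable {d : ℕ}

lemma VV_update_mono {x : Fin d → ℝ} {i : Fin d} : Monotone (fun y => VV (Function.update x i y)) := by
  intro y y' hyy z hz
  rw [mem_VV] at hz ⊢
  intro j
  by_cases hj : j = i
  · subst hj
    have h := hz j
    rw [Function.update_self] at h ⊢
    exact le_trans h hyy
  · have h := hz j
    rw [Function.update_of_ne hj] at h ⊢
    exact h

lemma measure_VV_update_tendsto (μ : Measure (XX d)) [IsFiniteMeasure μ] (x : Fin d → ℝ)
    (i : Fin d) :
    Filter.Tendsto (fun y : ℝ => (μ (VV (Function.update x i y))).toReal)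
      (nhdsWithin (x i) (Set.Icc (x i) 1)) (nhds ((μ (VV x)).toReal)) := by
  set g : ℝ → ℝ := fun y => (μ (VV (Function.update x i y))).toReal with hg
  have hgmono : Monotone g := by
    intro y y' hyy
    exact ENNReal.toReal_mono (measure_ne_top μ _) (measure_mono (VV_update_mono hyy))
  have hgx : g (x i) = (μ (VV x)).toReal := by
    rw [hg]
    simp only [Function.update_eq_self]
  -- limit along the sequence x i + 1/(n+1)
  have hseq : Filter.Tendsto (fun n : ℕ => g (x i + 1/(n+1))) Filter.atTop (nhds (g (x i))) := by
    have hanti : Antitone (fun n : ℕ => VV (Function.update x i (x i + 1/(n+1)))) := by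
      intro n m hnm
      refine VV_update_mono ?_
      have h1 : (0:ℝ) < n+1 := by positivity
      have h2 : (0:ℝ) < m+1 := by positivity
      have : (n:ℝ)+1 ≤ (m:ℝ)+1 := by exact_mod_cast Nat.add_le_add_right hnm 1
      have := one_div_le_one_div_of_le h1 this
      linarith
    have hiInter : ⋂ n : ℕ, VV (Function.update x i (x i + 1/(n+1))) = VV x := by
      ext z
      simp only [Set.mem_iInter, mem_VV]
      constructor
      · intro h j
        by_cases hj : j = i
        · subst hj
          by_contra hcon
          push_neg at hcon
          obtain ⟨n, hn⟩ := exists_nat_one_div_lt (sub_pos.2 hcon)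
          have := h n j
          rw [Function.update_self] at this
          push_cast at hn this
          linarith
        · have := h 0 j
          rwa [Function.update_of_ne hj] at this
      · intro h n j
        by_cases hj : j = i
        · subst hj
          rw [Function.update_self]
          have : (0:ℝ) < 1/(n+1) := by positivity
          linarith [h j]
        · rw [Function.update_of_ne hj]
          exact h j
    have htm := MeasureTheory.tendsto_measure_iInter_atTop
      (fun n => (meas_VV _).nullMeasurableSet) hanti ⟨0, measure_ne_top μ _⟩
    rw [hiInter] at htm
    have hcont := (ENNReal.tendsto_toReal (measure_ne_top μ (VV x))).comp htm
    rw [hgx]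
    exact hcont
  -- tendsto within Ioi
  have hIoi : Filter.Tendsto g (nhdsWithin (x i) (Set.Ioi (x i))) (nhds (g (x i))) := by
    have h1 := hgmono.tendsto_nhdsGT (x i)
    have h2 : sInf (g '' Set.Ioi (x i)) = g (x i) := by
      refine le_antisymm ?_ ?_
      · refine ge_of_tendsto hseq (Filter.Eventually.of_forall (fun n => ?_))
        refine csInf_le ⟨g (x i), ?_⟩ ?_
        · rintro r ⟨y, hy, rfl⟩
          exact hgmono (le_of_lt hy)
        · exact ⟨x i + 1/(n+1), by simp; positivity, rfl⟩
      · refine le_csInf ⟨g (x i + 1), ⟨x i + 1, by simp, rfl⟩⟩ ?_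
        rintro r ⟨y, hy, rfl⟩
        exact hgmono (le_of_lt hy)
    rwa [h2] at h1
  -- combine with the point itself
  have hIci : Filter.Tendsto g (nhdsWithin (x i) (Set.Ici (x i))) (nhds (g (x i))) := by
    have : Set.Ici (x i) = insert (x i) (Set.Ioi (x i)) := by
      rw [Set.Ioi_insert]
    rw [this, nhdsWithin_insert]
    rw [Filter.tendsto_sup]
    exact ⟨tendsto_pure_nhds g (x i), hIoi⟩
  have hfin : Filter.Tendsto g (nhdsWithin (x i) (Set.Icc (x i) 1)) (nhds (g (x i))) :=
    hIci.mono_left (nhdsWithin_mono _ Set.Icc_subset_Ici_self)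
  rw [hgx] at hfin
  exact hfin

variable (ν : MeasureTheory.SignedMeasure (XX d))

lemma rightCts_nu : RightCts (fun x => ν (VV x)) := by
  intro x _ i
  have hfun : ∀ y : ℝ, ν (VV (Function.update x i y))
      = (ν.toJordanDecomposition.posPart (VV (Function.update x i y))).toReal
        - (ν.toJordanDecomposition.negPart (VV (Function.update x i y))).toReal :=
    fun y => nu_apply ν (meas_VV _)
  have hx : ν (VV x)
      = (ν.toJordanDecomposition.posPart (VV x)).toReal
        - (ν.toJordanDecomposition.negPart (VV x)).toReal := nu_apply ν (meas_VV _)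
  simp only [hfun, hx]
  exact (measure_VV_update_tendsto ν.toJordanDecomposition.posPart x i).sub
    (measure_VV_update_tendsto ν.toJordanDecomposition.negPart x i)

end Part9
section Part10
variable {d : ℕ}

lemma grid_t_mem {S : Finset (Fin d)} (G : Grid d S 0 1) {k : Fin d → ℕ}
    (hk : k ∈ Fintype.piFinset (fun i => Finset.range (if i ∈ S then G.m i else 1)))
    (i : Fin d) (hi : i ∈ S) :
    0 ≤ G.t i (k i) ∧ G.t i (k i) ≤ 1 ∧ 0 ≤ G.t i (k i + 1) ∧ G.t i (k i + 1) ≤ 1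
      ∧ G.t i (k i) ≤ G.t i (k i + 1) := by
  have hki := Fintype.mem_piFinset.1 hk i
  rw [if_pos hi, Finset.mem_range] at hki
  have h0 : G.t i 0 = 0 := by rw [G.first i hi]; rfl
  have h1 : G.t i (G.m i) = 1 := by rw [G.last i hi]; rfl
  have ha := G.mono i hi 0 (k i) (Nat.zero_le _) (le_of_lt hki)
  have hb := G.mono i hi (k i) (G.m i) (le_of_lt hki) le_rfl
  have hc := G.mono i hi 0 (k i + 1) (Nat.zero_le _) hki
  have hd := G.mono i hi (k i + 1) (G.m i) hki le_rfl
  have he := G.mono i hi (k i) (k i + 1) (Nat.le_succ _) hki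
  rw [h0] at ha hc
  rw [h1] at hb hd
  exact ⟨ha, hb, hc, hd, he⟩

/-- grid sums of a completely monotone function telescope -/
lemma cm_gridSum {h : (Fin d → ℝ) → ℝ} (hcm : CompletelyMonotone h) {S : Finset (Fin d)}
    (hS : S.Nonempty) (G : Grid d S 0 1) :
    gridSum h S 0 0 1 G = quasiVol h S 0 0 1 := by
  classical
  unfold gridSum
  rw [← grid_telescope h S 0 0 1 G]
  refine Finset.sum_congr rfl (fun k hk => ?_)
  -- clip the vectors to [0,1]
  set a' : Fin d → ℝ := fun i => if i ∈ S then G.t i (k i) else 0 with ha'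
  set b' : Fin d → ℝ := fun i => if i ∈ S then G.t i (k i + 1) else 0 with hb'
  have hcongr : quasiVol h S 0 (fun i => G.t i (k i)) (fun i => G.t i (k i + 1))
      = quasiVol h S 0 a' b' :=
    quasiVol_congr_vec (fun i hi => by rw [ha']; simp [hi]) (fun i hi => by rw [hb']; simp [hi])
      (fun i _ => rfl)
  have hnn : 0 ≤ quasiVol h S 0 a' b' := by
    refine hcm S hS 0 (fun i _ => Or.inl rfl) a' b' ⟨fun i => ?_, fun i => ?_⟩
      ⟨fun i => ?_, fun i => ?_⟩ (fun i => ?_) <;>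
      simp only [ha', hb', Pi.zero_apply, Pi.one_apply] <;> by_cases hi : i ∈ S <;>
      simp only [hi, if_true, if_false]
    · exact (grid_t_mem G hk i hi).1
    · exact le_rfl
    · exact (grid_t_mem G hk i hi).2.1
    · exact zero_le_one
    · exact (grid_t_mem G hk i hi).2.2.1
    · exact le_rfl
    · exact (grid_t_mem G hk i hi).2.2.2.1
    · exact zero_le_one
    · exact (grid_t_mem G hk i hi).2.2.2.2
    · exact le_rfl
  rw [hcongr, abs_of_nonneg hnn]

lemma cm_vitaliVar {h : (Fin d → ℝ) → ℝ} (hcm : CompletelyMonotone h) {S : Finset (Fin d)}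
    (hS : S.Nonempty) :
    vitaliVar h S 0 0 1 = quasiVol h S 0 0 1 := by
  unfold vitaliVar
  have : Set.range (gridSum h S 0 0 1) = {quasiVol h S 0 0 1} := by
    apply Set.eq_singleton_iff_nonempty_unique_mem.2
    refine ⟨Set.range_nonempty _, ?_⟩
    rintro r ⟨G, rfl⟩
    exact cm_gridSum hcm hS G
  rw [this, csSup_singleton]

lemma cm_hkVar0 {h : (Fin d → ℝ) → ℝ} (hcm : CompletelyMonotone h) (h0 : h 0 = 0) :
    hkVar0 h = h 1 := by
  unfold hkVar0 hkVarOn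
  have hcongr : ∀ S ∈ (Finset.univ : Finset (Fin d)).powerset.erase ∅,
      vitaliVar h S 0 0 1 = quasiVol h S 0 0 1 := by
    intro S hSmem
    exact cm_vitaliVar hcm (Finset.nonempty_iff_ne_empty.2 (Finset.ne_of_mem_erase hSmem))
  rw [Finset.sum_congr rfl hcongr, sum_quasiVol_erase, h0, sub_zero]

/-- the candidate Jordan components of `f` -/
def Gf (μ : Measure (XX d)) : (Fin d → ℝ) → ℝ :=
  fun x => (μ (VV x)).toReal - (μ ({zpt d} : Set (XX d))).toReal

lemma Gf_zero (μ : Measure (XX d)) : Gf μ 0 = 0 := by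
  unfold Gf
  rw [VV_zero, sub_self]

lemma quasiVol_Gf (μ : Measure (XX d)) [IsFiniteMeasure μ] {S : Finset (Fin d)} (hS : S ≠ ∅)
    (p a b : Fin d → ℝ) (hab : ∀ i ∈ S, a i ≤ b i) :
    quasiVol (Gf μ) S p a b = (μ (BoxP S p a b)).toReal := by
  unfold Gf
  rw [quasiVol_sub, quasiVol_meas μ S p a b hab, quasiVol_const _ S hS, sub_zero]

lemma cm_Gf (μ : Measure (XX d)) [IsFiniteMeasure μ] : CompletelyMonotone (Gf μ) := by
  intro S hS p _ a b _ _ hab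
  rw [quasiVol_Gf μ (Finset.nonempty_iff_ne_empty.1 hS) p a b (fun i _ => hab i)]
  exact ENNReal.toReal_nonneg

lemma VV_one : VV (1 : Fin d → ℝ) = Set.univ := by
  ext z
  rw [mem_VV]
  simp only [Set.mem_univ, iff_true, Pi.one_apply]
  exact fun i => coord_le_one z i

lemma Gf_one (μ : Measure (XX d)) :
    Gf μ 1 = (μ Set.univ).toReal - (μ ({zpt d} : Set (XX d))).toReal := by
  unfold Gf
  rw [VV_one]

lemma Gf_diff_apply (μ : Measure (XX d)) [IsFiniteMeasure μ] {x : Fin d → ℝ}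
    (hx : x ∈ Set.Icc (0 : Fin d → ℝ) 1) :
    Gf μ x = (μ (Subtype.val ⁻¹' (Set.Icc (0 : Fin d → ℝ) x \ {0}))).toReal := by
  have hsub : ({zpt d} : Set (XX d)) ⊆ VV x := by
    intro z hz
    rw [Set.mem_singleton_iff] at hz
    subst hz
    rw [mem_VV]
    intro i
    simpa [zpt] using hx.1 i
  have hset : Subtype.val ⁻¹' (Set.Icc (0 : Fin d → ℝ) x \ {0}) = VV x \ ({zpt d} : Set (XX d)) := by
    ext z
    simp only [Set.mem_preimage, Set.mem_diff, Set.mem_singleton_iff, VV]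
    constructor
    · rintro ⟨h1, h2⟩
      exact ⟨h1, fun h => h2 (by rw [h]; rfl)⟩
    · rintro ⟨h1, h2⟩
      exact ⟨h1, fun h => h2 (Subtype.ext h)⟩
  rw [hset, measure_diff hsub meas_singleton_zpt.nullMeasurableSet (measure_ne_top μ _),
    ENNReal.toReal_sub_of_le (measure_mono hsub) (measure_ne_top μ _)]
  rfl

end Part10
section Part11
variable {d : ℕ} (ν : MeasureTheory.SignedMeasure (XX d))

lemma hahn_pair {ε' : ENNReal} (hε' : 0 < ε') :
    ∃ C₁ C₂ : Set (XX d), IsClosed C₁ ∧ IsClosed C₂ ∧ Disjoint C₁ C₂ ∧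
      ν.toJordanDecomposition.negPart (Set.univ \ C₁) ≤ ε' ∧
      ν.toJordanDecomposition.posPart (Set.univ \ C₂) ≤ ε' := by
  have hms := ν.toJordanDecomposition.mutuallySingular
  set U := hms.nullSet with hU
  have hUmeas : MeasurableSet U := hms.measurableSet_nullSet
  have hUp : ν.toJordanDecomposition.posPart U = 0 := hms.measure_nullSet
  have hUm : ν.toJordanDecomposition.negPart Uᶜ = 0 := hms.measure_compl_nullSet
  obtain ⟨C₁, hC₁sub, hC₁closed, hC₁approx⟩ :=
    exists_closed_subset ν.toJordanDecomposition.negPart hUmeas hε'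
  obtain ⟨C₂, hC₂sub, hC₂closed, hC₂approx⟩ :=
    exists_closed_subset ν.toJordanDecomposition.posPart hUmeas.compl hε'
  refine ⟨C₁, C₂, hC₁closed, hC₂closed,
    Set.disjoint_left.2 (fun z hz hz' => (hC₂sub hz') (hC₁sub hz)), ?_, ?_⟩
  · have hsub : Set.univ \ C₁ ⊆ (U \ C₁) ∪ Uᶜ := by
      intro z hz
      by_cases h : z ∈ U
      · exact Or.inl ⟨h, hz.2⟩
      · exact Or.inr h
    calc ν.toJordanDecomposition.negPart (Set.univ \ C₁)
        ≤ ν.toJordanDecomposition.negPart ((U \ C₁) ∪ Uᶜ) := measure_mono hsub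
      _ ≤ ν.toJordanDecomposition.negPart (U \ C₁) + ν.toJordanDecomposition.negPart Uᶜ :=
          measure_union_le _ _
      _ ≤ ε' + 0 := add_le_add hC₁approx (le_of_eq hUm)
      _ = ε' := by rw [add_zero]
  · have hsub : Set.univ \ C₂ ⊆ (Uᶜ \ C₂) ∪ U := by
      intro z hz
      by_cases h : z ∈ U
      · exact Or.inr h
      · exact Or.inl ⟨h, hz.2⟩
    calc ν.toJordanDecomposition.posPart (Set.univ \ C₂)
        ≤ ν.toJordanDecomposition.posPart ((Uᶜ \ C₂) ∪ U) := measure_mono hsub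
      _ ≤ ν.toJordanDecomposition.posPart (Uᶜ \ C₂) + ν.toJordanDecomposition.posPart U :=
          measure_union_le _ _
      _ ≤ ε' + 0 := add_le_add hC₂approx (le_of_eq hUp)
      _ = ε' := by rw [add_zero]

lemma min_sum_small (x : Fin d → ℝ) (hx : x ∈ Set.Icc (0 : Fin d → ℝ) 1) {ε : ℝ} (hε : 0 < ε) :
    ∃ n : ℕ, ∑ S ∈ (Finset.univ : Finset (Fin d)).powerset.erase ∅,
      ∑ k ∈ Fintype.piFinset (fun i => Finset.range (if i ∈ S then (gridN n x hx S).m i else 1)),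
        min (ν.toJordanDecomposition.posPart (BoxP S 0 (fun i => (gridN n x hx S).t i (k i))
              (fun i => (gridN n x hx S).t i (k i + 1)))).toReal
            (ν.toJordanDecomposition.negPart (BoxP S 0 (fun i => (gridN n x hx S).t i (k i))
              (fun i => (gridN n x hx S).t i (k i + 1)))).toReal
      ≤ ε := by
  classical
  set μp := ν.toJordanDecomposition.posPart with hμp
  set μm := ν.toJordanDecomposition.negPart with hμm
  set ε2 := ε / 2 with hε2
  have hε2pos : (0:ℝ) < ε2 := by positivity
  set ε' := ENNReal.ofReal ε2 with hε'
  have hε'top : ε' ≠ ⊤ := ENNReal.ofReal_ne_top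
  obtain ⟨C₁, C₂, hC₁closed, hC₂closed, hdisj, hmC₁, hpC₂⟩ :=
    hahn_pair ν (ENNReal.ofReal_pos.2 hε2pos)
  obtain ⟨δ, hδpos, hδsep⟩ := exists_sep hC₁closed hC₂closed hdisj
  obtain ⟨n, hn⟩ := exists_pow_lt_of_lt_one hδpos (by norm_num : (1:ℝ)/2 < 1)
  refine ⟨n, ?_⟩
  set G : (S : Finset (Fin d)) → Grid d S 0 1 := fun S => gridN n x hx S with hG
  set B : Finset (Fin d) → (Fin d → ℕ) → Set (XX d) := fun S k =>
    BoxP S 0 (fun i => (G S).t i (k i)) (fun i => (G S).t i (k i + 1)) with hB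
  have hcell_diam : ∀ S k z z', z ∈ B S k → z' ∈ B S k → dist z z' < δ := by
    intro S k z z' hz hz'
    have h1 : dist z z' ≤ 1/2^n := by
      refine BoxP_dist_le (by positivity) (fun i _ => ?_) hz hz'
      have := gridN_mesh n x hx S i (k i)
      linarith
    have hmesh : ((1:ℝ)/2)^n = 1/2^n := by rw [div_pow, one_pow]
    calc dist z z' ≤ 1/2^n := h1
      _ = ((1:ℝ)/2)^n := hmesh.symm
      _ < δ := hn
  have hperS : ∀ S ∈ (Finset.univ : Finset (Fin d)).powerset.erase ∅,
      ∑ k ∈ Fintype.piFinset (fun i => Finset.range (if i ∈ S then (G S).m i else 1)),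
        min (μp (B S k)).toReal (μm (B S k)).toReal
      ≤ (μm (BoxP S 0 0 1 ∩ (Set.univ \ C₁))).toReal
        + (μp (BoxP S 0 0 1 ∩ (Set.univ \ C₂))).toReal := by
    intro S _
    set K := Fintype.piFinset (fun i => Finset.range (if i ∈ S then (G S).m i else 1)) with hK
    set K₂ := K.filter (fun k => (B S k ∩ C₂).Nonempty) with hK₂
    have hcellE : ∀ k ∈ K, B S k ⊆ BoxP S 0 0 1 := by
      intro k hk
      refine BoxP_cell_subset (G S) (fun i hi => ?_)
      have := Fintype.mem_piFinset.1 hk i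
      rwa [if_pos hi, Finset.mem_range] at this
    have hsum2 : ∑ k ∈ K₂, (μm (B S k)).toReal
        = (μm (⋃ k ∈ K₂, B S k)).toReal := by
      calc ∑ k ∈ K₂, (μm (B S k)).toReal = (∑ k ∈ K₂, μm (B S k)).toReal :=
            (ENNReal.toReal_sum (fun k _ => measure_ne_top _ _)).symm
        _ = _ := by
            rw [measure_biUnion_finset ((BoxP_cells_pairwise_disjoint (G S)).subset
              (by
                have hsub : K₂ ⊆ K := by
                  rw [hK₂]; exact Finset.filter_subset _ _
                exact_mod_cast hsub))
              (fun k _ => meas_BoxP _ _ _ _)]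
    have hsum1 : ∑ k ∈ K \ K₂, (μp (B S k)).toReal
        = (μp (⋃ k ∈ K \ K₂, B S k)).toReal := by
      calc ∑ k ∈ K \ K₂, (μp (B S k)).toReal = (∑ k ∈ K \ K₂, μp (B S k)).toReal :=
            (ENNReal.toReal_sum (fun k _ => measure_ne_top _ _)).symm
        _ = _ := by
            rw [measure_biUnion_finset ((BoxP_cells_pairwise_disjoint (G S)).subset
              (by exact_mod_cast Finset.sdiff_subset)) (fun k _ => meas_BoxP _ _ _ _)]
    have hW₂ : (⋃ k ∈ K₂, B S k) ⊆ BoxP S 0 0 1 ∩ (Set.univ \ C₁) := by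
      intro z hz
      rw [Set.mem_iUnion₂] at hz
      obtain ⟨k, hk, hzk⟩ := hz
      have hk' := Finset.mem_filter.1 hk
      refine ⟨hcellE k hk'.1 hzk, Set.mem_univ z, fun hzC₁ => ?_⟩
      obtain ⟨z', hz', hzC₂⟩ := hk'.2
      exact absurd (hδsep z hzC₁ z' hzC₂) (not_le.2 (hcell_diam S k z z' hzk hz'))
    have hW₁ : (⋃ k ∈ K \ K₂, B S k) ⊆ BoxP S 0 0 1 ∩ (Set.univ \ C₂) := by
      intro z hz
      rw [Set.mem_iUnion₂] at hz
      obtain ⟨k, hk, hzk⟩ := hz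
      have hk' := Finset.mem_sdiff.1 hk
      refine ⟨hcellE k hk'.1 hzk, Set.mem_univ z, fun hzC₂ => ?_⟩
      exact hk'.2 (Finset.mem_filter.2 ⟨hk'.1, ⟨z, hzk, hzC₂⟩⟩)
    calc ∑ k ∈ K, min (μp (B S k)).toReal (μm (B S k)).toReal
        = ∑ k ∈ K₂, min (μp (B S k)).toReal (μm (B S k)).toReal
          + ∑ k ∈ K \ K₂, min (μp (B S k)).toReal (μm (B S k)).toReal :=
          by
            have hsub : K₂ ⊆ K := by rw [hK₂]; exact Finset.filter_subset _ _
            rw [← Finset.sum_sdiff hsub]; ring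
      _ ≤ ∑ k ∈ K₂, (μm (B S k)).toReal + ∑ k ∈ K \ K₂, (μp (B S k)).toReal :=
          add_le_add (Finset.sum_le_sum (fun k _ => min_le_right _ _))
            (Finset.sum_le_sum (fun k _ => min_le_left _ _))
      _ = (μm (⋃ k ∈ K₂, B S k)).toReal + (μp (⋃ k ∈ K \ K₂, B S k)).toReal := by
          rw [hsum2, hsum1]
      _ ≤ _ := add_le_add
          (ENNReal.toReal_mono (measure_ne_top _ _) (measure_mono hW₂))
          (ENNReal.toReal_mono (measure_ne_top _ _) (measure_mono hW₁))
  -- sum the per-S bounds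
  have hsumS : ∀ (μ : Measure (XX d)) (_ : IsFiniteMeasure μ) (C : Set (XX d)),
      MeasurableSet C →
      ∑ S ∈ (Finset.univ : Finset (Fin d)).powerset.erase ∅,
        (μ (BoxP S 0 0 1 ∩ (Set.univ \ C))).toReal ≤ (μ (Set.univ \ C)).toReal := by
    intro μ hfin C hC
    have hd : (↑((Finset.univ : Finset (Fin d)).powerset.erase ∅) :
        Set (Finset (Fin d))).PairwiseDisjoint
        (fun S => BoxP S 0 (0 : Fin d → ℝ) 1 ∩ (Set.univ \ C)) := by
      intro S _ S' _ hne
      simp only [Function.onFun]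
      exact Disjoint.mono Set.inter_subset_left Set.inter_subset_left
        (BoxP_disjoint_of_ne hne (fun i _ => le_rfl) (fun i _ => le_rfl))
    calc ∑ S ∈ (Finset.univ : Finset (Fin d)).powerset.erase ∅,
          (μ (BoxP S 0 0 1 ∩ (Set.univ \ C))).toReal
        = (∑ S ∈ (Finset.univ : Finset (Fin d)).powerset.erase ∅,
            μ (BoxP S 0 0 1 ∩ (Set.univ \ C))).toReal :=
          (ENNReal.toReal_sum (fun S _ => measure_ne_top _ _)).symm
      _ = (μ (⋃ S ∈ (Finset.univ : Finset (Fin d)).powerset.erase ∅,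
            BoxP S 0 0 1 ∩ (Set.univ \ C))).toReal := by
          rw [measure_biUnion_finset hd
            (fun S _ => (meas_BoxP _ _ _ _).inter (MeasurableSet.univ.diff hC))]
      _ ≤ (μ (Set.univ \ C)).toReal := by
          refine ENNReal.toReal_mono (measure_ne_top _ _) (measure_mono ?_)
          exact Set.iUnion₂_subset (fun S _ => Set.inter_subset_right)
  have hmtop : (μm (Set.univ \ C₁)).toReal ≤ ε2 := by
    calc (μm (Set.univ \ C₁)).toReal ≤ ε'.toReal := ENNReal.toReal_mono hε'top hmC₁
      _ = ε2 := ENNReal.toReal_ofReal hε2pos.le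
  have hptop : (μp (Set.univ \ C₂)).toReal ≤ ε2 := by
    calc (μp (Set.univ \ C₂)).toReal ≤ ε'.toReal := ENNReal.toReal_mono hε'top hpC₂
      _ = ε2 := ENNReal.toReal_ofReal hε2pos.le
  calc ∑ S ∈ (Finset.univ : Finset (Fin d)).powerset.erase ∅,
        ∑ k ∈ Fintype.piFinset (fun i => Finset.range (if i ∈ S then (G S).m i else 1)),
          min (μp (B S k)).toReal (μm (B S k)).toReal
      ≤ ∑ S ∈ (Finset.univ : Finset (Fin d)).powerset.erase ∅,
          ((μm (BoxP S 0 0 1 ∩ (Set.univ \ C₁))).toReal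
            + (μp (BoxP S 0 0 1 ∩ (Set.univ \ C₂))).toReal) :=
        Finset.sum_le_sum hperS
    _ = ∑ S ∈ (Finset.univ : Finset (Fin d)).powerset.erase ∅,
          (μm (BoxP S 0 0 1 ∩ (Set.univ \ C₁))).toReal
        + ∑ S ∈ (Finset.univ : Finset (Fin d)).powerset.erase ∅,
          (μp (BoxP S 0 0 1 ∩ (Set.univ \ C₂))).toReal := Finset.sum_add_distrib
    _ ≤ (μm (Set.univ \ C₁)).toReal + (μp (Set.univ \ C₂)).toReal :=
        add_le_add (hsumS μm inferInstance C₁ hC₁closed.measurableSet)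
          (hsumS μp inferInstance C₂ hC₂closed.measurableSet)
    _ ≤ ε2 + ε2 := add_le_add hmtop hptop
    _ = ε := by rw [hε2]; ring

end Part11
section Part12
variable {d : ℕ}

lemma gridN_t_mono (n : ℕ) (x : Fin d → ℝ) (hx : x ∈ Set.Icc (0 : Fin d → ℝ) 1)
    (S : Finset (Fin d)) (i : Fin d) {j k : ℕ} (hjk : j ≤ k) :
    (gridN n x hx S).t i j ≤ (gridN n x hx S).t i k := by
  dsimp only [gridN]
  have hpow : (0:ℝ) < 2^n := by positivity
  by_cases hj : j ≤ 2^n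
  · rw [if_pos hj]
    by_cases hk : k ≤ 2^n
    · rw [if_pos hk]
      refine min_le_min (div_le_div_of_nonneg_right ?_ hpow.le) le_rfl
      exact_mod_cast hjk
    · rw [if_neg hk]
      exact le_trans (min_le_right _ _) (le_max_right _ _)
  · have hk : ¬ k ≤ 2^n := fun h => hj (hjk.trans h)
    rw [if_neg hj, if_neg hk]
    refine max_le_max (div_le_div_of_nonneg_right ?_ hpow.le) le_rfl
    exact_mod_cast Nat.sub_le_sub_right hjk _

lemma gridN_t_bounds (n : ℕ) (x : Fin d → ℝ) (hx : x ∈ Set.Icc (0 : Fin d → ℝ) 1)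
    (S : Finset (Fin d)) (i : Fin d) {j : ℕ} (hj : j ≤ 2^n + (2^n + 1)) :
    0 ≤ (gridN n x hx S).t i j ∧ (gridN n x hx S).t i j ≤ 1 := by
  dsimp only [gridN]
  have hpow : (0:ℝ) < 2^n := by positivity
  have hx0 : (0:ℝ) ≤ x i := by simpa using hx.1 i
  have hx1 : x i ≤ 1 := by simpa using hx.2 i
  by_cases h : j ≤ 2^n
  · rw [if_pos h]
    constructor
    · exact le_min (by positivity) hx0
    · exact le_trans (min_le_right _ _) hx1
  · rw [if_neg h]
    constructor
    · exact le_trans hx0 (le_max_right _ _)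
    · refine max_le ?_ hx1
      rw [div_le_one hpow]
      have : (j - (2^n+1) : ℕ) ≤ 2^n := by omega
      exact_mod_cast this

variable (ν : MeasureTheory.SignedMeasure (XX d))

lemma clause6 (fp fm : (Fin d → ℝ) → ℝ)
    (hfp : CompletelyMonotone fp) (hfm : CompletelyMonotone fm)
    (hfp0 : fp 0 = 0) (hfm0 : fm 0 = 0)
    (hdecomp : ∀ y ∈ Set.Icc (0 : Fin d → ℝ) 1,
      ν (VV y) = ν (VV (0 : Fin d → ℝ)) + fp y - fm y)
    (hvar : hkVar0 (fun y => ν (VV y)) = hkVar0 fp + hkVar0 fm)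
    (x : Fin d → ℝ) (hx : x ∈ Set.Icc (0 : Fin d → ℝ) 1) :
    fp x = Gf ν.toJordanDecomposition.posPart x
      ∧ fm x = Gf ν.toJordanDecomposition.negPart x := by
  classical
  set μp := ν.toJordanDecomposition.posPart with hμp
  set μm := ν.toJordanDecomposition.negPart with hμm
  have hdiff : ∀ y ∈ Set.Icc (0 : Fin d → ℝ) 1, fp y - fm y = Gf μp y - Gf μm y := by
    intro y hy
    have h1 := hdecomp y hy
    have h2 : ν (VV y) = (μp (VV y)).toReal - (μm (VV y)).toReal := nu_apply ν (meas_VV y)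
    have h3 : ν (VV (0 : Fin d → ℝ))
        = (μp ({zpt d} : Set (XX d))).toReal - (μm ({zpt d} : Set (XX d))).toReal := by
      rw [nu_apply ν (meas_VV 0), VV_zero]
    unfold Gf
    rw [h2, h3] at h1
    linarith
  have hone : (1 : Fin d → ℝ) ∈ Set.Icc (0 : Fin d → ℝ) 1 := Set.right_mem_Icc.2 zero_le_one
  have ha := cm_hkVar0 hfp hfp0
  have hb := cm_hkVar0 hfm hfm0
  have hd : hkVar0 (fun y => ν (VV y)) = Gf μp 1 + Gf μm 1 := by
    rw [hkVar0_nu ν, Gf_one, Gf_one]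
    ring
  have he := hdiff 1 hone
  have hfp1 : fp 1 = Gf μp 1 := by linarith [hvar, ha, hb, hd, he]
  have hfm1 : fm 1 = Gf μm 1 := by linarith [hvar, ha, hb, hd, he]
  have key : fp x = Gf μp x := by
    have habs : ∀ ε : ℝ, 0 < ε → |fp x - Gf μp x| ≤ ε := by
      intro ε hε
      obtain ⟨n, hM⟩ := min_sum_small ν x hx hε
      set E0 := (Finset.univ : Finset (Fin d)).powerset.erase ∅ with hE0
      set B : Finset (Fin d) → (Fin d → ℕ) → Set (XX d) := fun S k =>
        BoxP S 0 (fun i => (gridN n x hx S).t i (k i))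
          (fun i => (gridN n x hx S).t i (k i + 1)) with hB
      set Kfull : Finset (Fin d) → Finset (Fin d → ℕ) := fun S =>
        Fintype.piFinset (fun i => Finset.range (if i ∈ S then (gridN n x hx S).m i else 1))
        with hKfull
      set Ksub : Finset (Fin d) → Finset (Fin d → ℕ) := fun S =>
        Fintype.piFinset (fun i => Finset.range (if i ∈ S then (gridNsub n x hx S).m i else 1))
        with hKsub
      set DD : Finset (Fin d) → (Fin d → ℕ) → ℝ := fun S k =>
        quasiVol fp S 0 (fun i => (gridN n x hx S).t i (k i))
            (fun i => (gridN n x hx S).t i (k i + 1))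
          - quasiVol (Gf μp) S 0 (fun i => (gridN n x hx S).t i (k i))
            (fun i => (gridN n x hx S).t i (k i + 1)) with hDD
      set MinT : Finset (Fin d) → (Fin d → ℕ) → ℝ := fun S k =>
        min (μp (B S k)).toReal (μm (B S k)).toReal with hMinT
      have hMin_nonneg : ∀ S k, 0 ≤ MinT S k :=
        fun S k => le_min ENNReal.toReal_nonneg ENNReal.toReal_nonneg
      -- index bounds
      have hkmem : ∀ S, ∀ k ∈ Kfull S, ∀ i, k i + 1 ≤ 2^n + (2^n + 1) := by
        intro S k hk i
        have := Fintype.mem_piFinset.1 hk i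
        by_cases hi : i ∈ S
        · rw [if_pos hi, Finset.mem_range] at this
          exact this
        · rw [if_neg hi, Finset.mem_range, Nat.lt_one_iff] at this
          rw [this]
          have h1 : (1:ℕ) ≤ 2^n := Nat.one_le_two_pow
          omega
      -- telescoping identities
      have ht : ∀ S : Finset (Fin d), (gridNsub n x hx S).t = (gridN n x hx S).t := fun _ => rfl
      have htel_full : ∀ h : (Fin d → ℝ) → ℝ, ∀ S ∈ E0,
          ∑ k ∈ Kfull S, quasiVol h S 0 (fun i => (gridN n x hx S).t i (k i))
            (fun i => (gridN n x hx S).t i (k i + 1)) = quasiVol h S 0 0 1 :=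
        fun h S _ => grid_telescope h S 0 0 1 (gridN n x hx S)
      have htel_sub : ∀ h : (Fin d → ℝ) → ℝ, ∀ S ∈ E0,
          ∑ k ∈ Ksub S, quasiVol h S 0 (fun i => (gridN n x hx S).t i (k i))
            (fun i => (gridN n x hx S).t i (k i + 1)) = quasiVol h S 0 0 x := by
        intro h S _
        have := grid_telescope h S 0 0 x (gridNsub n x hx S)
        rwa [ht S] at this
      -- bound on DD
      have hbound : ∀ S ∈ E0, ∀ k ∈ Kfull S, -(MinT S k) ≤ DD S k := by
        intro S hS k hk
        have hSne : S.Nonempty :=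
          Finset.nonempty_iff_ne_empty.2 (Finset.ne_of_mem_erase hS)
        have hamem : (fun i => (gridN n x hx S).t i (k i)) ∈ Set.Icc (0 : Fin d → ℝ) 1 := by
          refine ⟨fun i => ?_, fun i => ?_⟩ <;>
            have := gridN_t_bounds n x hx S i (j := k i) (by have := hkmem S k hk i; omega)
          · simpa using this.1
          · simpa using this.2
        have hbmem : (fun i => (gridN n x hx S).t i (k i + 1)) ∈ Set.Icc (0 : Fin d → ℝ) 1 := by
          refine ⟨fun i => ?_, fun i => ?_⟩ <;>
            have := gridN_t_bounds n x hx S i (j := k i + 1) (hkmem S k hk i)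
          · simpa using this.1
          · simpa using this.2
        have hab : (fun i => (gridN n x hx S).t i (k i)) ≤ fun i => (gridN n x hx S).t i (k i + 1) :=
          fun i => gridN_t_mono n x hx S i (Nat.le_succ _)
        have hΔfp : 0 ≤ quasiVol fp S 0 (fun i => (gridN n x hx S).t i (k i))
            (fun i => (gridN n x hx S).t i (k i + 1)) :=
          hfp S hSne 0 (fun i _ => Or.inl rfl) _ _ hamem hbmem hab
        have hΔfm : 0 ≤ quasiVol fm S 0 (fun i => (gridN n x hx S).t i (k i))
            (fun i => (gridN n x hx S).t i (k i + 1)) :=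
          hfm S hSne 0 (fun i _ => Or.inl rfl) _ _ hamem hbmem hab
        have habS : ∀ i ∈ S, (fun i => (gridN n x hx S).t i (k i)) i
            ≤ (fun i => (gridN n x hx S).t i (k i + 1)) i := fun i _ => hab i
        have hQGp : quasiVol (Gf μp) S 0 (fun i => (gridN n x hx S).t i (k i))
            (fun i => (gridN n x hx S).t i (k i + 1)) = (μp (B S k)).toReal :=
          quasiVol_Gf μp (Finset.nonempty_iff_ne_empty.1 hSne) _ _ _ habS
        have hQGm : quasiVol (Gf μm) S 0 (fun i => (gridN n x hx S).t i (k i))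
            (fun i => (gridN n x hx S).t i (k i + 1)) = (μm (B S k)).toReal :=
          quasiVol_Gf μm (Finset.nonempty_iff_ne_empty.1 hSne) _ _ _ habS
        have hswap : quasiVol fp S 0 (fun i => (gridN n x hx S).t i (k i))
              (fun i => (gridN n x hx S).t i (k i + 1))
            - quasiVol fm S 0 (fun i => (gridN n x hx S).t i (k i))
              (fun i => (gridN n x hx S).t i (k i + 1))
            = (μp (B S k)).toReal - (μm (B S k)).toReal := by
          rw [← hQGp, ← hQGm, ← quasiVol_sub, ← quasiVol_sub]
          refine quasiVol_congr_fun hdiff (fun i hi => ?_) (fun i hi => ?_) (fun i _ => ?_)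
          · exact ⟨by simpa using hamem.1 i, by simpa using hamem.2 i⟩
          · exact ⟨by simpa using hbmem.1 i, by simpa using hbmem.2 i⟩
          · simp
        rw [hDD, hMinT]
        simp only
        rw [hQGp, neg_le, neg_sub]
        refine le_min (by linarith) (by linarith)
      -- the two double sums
      have hsubK : ∀ S, Ksub S ⊆ Kfull S := by
        intro S
        refine Fintype.piFinset_subset _ _ (fun i => ?_)
        by_cases hi : i ∈ S
        · simp only [hi, if_true]
          refine Finset.range_subset_range.2 ?_
          show 2^n ≤ 2^n + (2^n + 1)
          exact Nat.le_add_right _ _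
        · simp only [hi, if_false]
          exact subset_rfl
      have hA : ∑ S ∈ E0, ∑ k ∈ Ksub S, DD S k = fp x - Gf μp x := by
        have h1 : ∀ S ∈ E0, ∑ k ∈ Ksub S, DD S k
            = (∑ k ∈ Ksub S, quasiVol fp S 0 (fun i => (gridN n x hx S).t i (k i))
                (fun i => (gridN n x hx S).t i (k i + 1)))
              - ∑ k ∈ Ksub S, quasiVol (Gf μp) S 0 (fun i => (gridN n x hx S).t i (k i))
                (fun i => (gridN n x hx S).t i (k i + 1)) := by
          intro S _
          rw [← Finset.sum_sub_distrib]
        rw [Finset.sum_congr rfl h1, Finset.sum_sub_distrib,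
          Finset.sum_congr rfl (htel_sub fp), Finset.sum_congr rfl (htel_sub (Gf μp)),
          sum_quasiVol_erase, sum_quasiVol_erase, hfp0, Gf_zero]
        ring
      have hT : ∑ S ∈ E0, ∑ k ∈ Kfull S, DD S k = 0 := by
        have h1 : ∀ S ∈ E0, ∑ k ∈ Kfull S, DD S k
            = (∑ k ∈ Kfull S, quasiVol fp S 0 (fun i => (gridN n x hx S).t i (k i))
                (fun i => (gridN n x hx S).t i (k i + 1)))
              - ∑ k ∈ Kfull S, quasiVol (Gf μp) S 0 (fun i => (gridN n x hx S).t i (k i))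
                (fun i => (gridN n x hx S).t i (k i + 1)) := by
          intro S _
          rw [← Finset.sum_sub_distrib]
        rw [Finset.sum_congr rfl h1, Finset.sum_sub_distrib,
          Finset.sum_congr rfl (htel_full fp), Finset.sum_congr rfl (htel_full (Gf μp)),
          sum_quasiVol_erase, sum_quasiVol_erase, hfp0, Gf_zero, hfp1]
        ring
      have hMfull : ∑ S ∈ E0, ∑ k ∈ Kfull S, MinT S k ≤ ε := hM
      have hMsub_le : ∑ S ∈ E0, ∑ k ∈ Ksub S, MinT S k
          ≤ ∑ S ∈ E0, ∑ k ∈ Kfull S, MinT S k :=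
        Finset.sum_le_sum (fun S _ => Finset.sum_le_sum_of_subset_of_nonneg (hsubK S)
          (fun k _ _ => hMin_nonneg S k))
      have hMdiff_le : ∑ S ∈ E0, ∑ k ∈ Kfull S \ Ksub S, MinT S k
          ≤ ∑ S ∈ E0, ∑ k ∈ Kfull S, MinT S k :=
        Finset.sum_le_sum (fun S _ => Finset.sum_le_sum_of_subset_of_nonneg
          Finset.sdiff_subset (fun k _ _ => hMin_nonneg S k))
      have hlow : -(∑ S ∈ E0, ∑ k ∈ Ksub S, MinT S k) ≤ ∑ S ∈ E0, ∑ k ∈ Ksub S, DD S k := by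
        rw [← Finset.sum_neg_distrib]
        refine Finset.sum_le_sum (fun S hS => ?_)
        rw [← Finset.sum_neg_distrib]
        exact Finset.sum_le_sum (fun k hk => hbound S hS k (hsubK S hk))
      have hlowdiff : -(∑ S ∈ E0, ∑ k ∈ Kfull S \ Ksub S, MinT S k)
          ≤ ∑ S ∈ E0, ∑ k ∈ Kfull S \ Ksub S, DD S k := by
        rw [← Finset.sum_neg_distrib]
        refine Finset.sum_le_sum (fun S hS => ?_)
        rw [← Finset.sum_neg_distrib]
        exact Finset.sum_le_sum (fun k hk => hbound S hS k (Finset.mem_sdiff.1 hk).1)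
      have hsplit : ∑ S ∈ E0, ∑ k ∈ Kfull S \ Ksub S, DD S k
          + ∑ S ∈ E0, ∑ k ∈ Ksub S, DD S k = 0 := by
        rw [← Finset.sum_add_distrib] at *
        rw [← hT]
        exact Finset.sum_congr rfl (fun S _ => Finset.sum_sdiff (hsubK S))
      rw [abs_le]
      constructor
      · have := le_trans hMsub_le hMfull
        linarith [hA, hlow]
      · have := le_trans hMdiff_le hMfull
        linarith [hA, hlowdiff, hsplit]
    have h0 : |fp x - Gf μp x| ≤ 0 := by
      refine le_of_forall_pos_le_add (fun ε hε => ?_)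
      rw [zero_add]
      exact habs ε hε
    have := abs_nonpos_iff.1 h0
    linarith [sub_eq_zero.1 this]
  refine ⟨key, ?_⟩
  have := hdiff x hx
  linarith
end Part12

/-- Every finite signed Borel measure on `[0,1]^d` arises from a unique right-continuous
function of bounded HK-variation, with matching total variation and Jordan decompositions. -/
theorem stmt5 {d : ℕ} (ν : MeasureTheory.SignedMeasure (Set.Icc (0 : Fin d → ℝ) 1)) :
    ∃ f : (Fin d → ℝ) → ℝ, RightCts f ∧ BddHKVar f ∧
      (∀ x ∈ Set.Icc (0 : Fin d → ℝ) 1,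
        f x = ν (Subtype.val ⁻¹' Set.Icc (0 : Fin d → ℝ) x)) ∧
      (ν.totalVariation Set.univ).toReal = hkVar0 f + |f 0| ∧
      (∀ f' : (Fin d → ℝ) → ℝ, RightCts f' → BddHKVar f' →
        (∀ x ∈ Set.Icc (0 : Fin d → ℝ) 1,
          f' x = ν (Subtype.val ⁻¹' Set.Icc (0 : Fin d → ℝ) x)) →
        ∀ x ∈ Set.Icc (0 : Fin d → ℝ) 1, f' x = f x) ∧
      ∀ fp fm : (Fin d → ℝ) → ℝ,
        CompletelyMonotone fp → CompletelyMonotone fm → fp 0 = 0 → fm 0 = 0 →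
        (∀ x ∈ Set.Icc (0 : Fin d → ℝ) 1, f x = f 0 + fp x - fm x) →
        hkVar0 f = hkVar0 fp + hkVar0 fm →
        ∀ x ∈ Set.Icc (0 : Fin d → ℝ) 1,
          fp x = (ν.toJordanDecomposition.posPart
            (Subtype.val ⁻¹' (Set.Icc (0 : Fin d → ℝ) x \ {0}))).toReal ∧
          fm x = (ν.toJordanDecomposition.negPart
            (Subtype.val ⁻¹' (Set.Icc (0 : Fin d → ℝ) x \ {0}))).toReal := by
  refine ⟨fun x => ν (VV x), rightCts_nu ν, bddHKVar_nu ν, fun x _ => rfl,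
    totalVariation_clause ν, ?_, ?_⟩
  · intro f' _ _ h3 x hx
    exact h3 x hx
  · intro fp fm hfp hfm hfp0 hfm0 hdec hvar x hx
    obtain ⟨h1, h2⟩ := clause6 ν fp fm hfp hfm hfp0 hfm0 hdec hvar x hx
    rw [h1, h2, Gf_diff_apply _ hx, Gf_diff_apply _ hx]
    exact ⟨rfl, rfl⟩
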